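/- arXiv:0909.0666 — 4 statements merged into one kernel-verified Lean document; each statement's English description precedes it below -/
import Mathlib

section
/- Let p and q be distinct primes, and let m, n ≥ 2. Then no finite-index subgroup K of SL_m(ℤ_p) admits an injective group homomorphism into SL_n(ℤ_q). -/
open Matrix Finset

namespace NoEmbedAux

variable {q : ℕ} [hq : Fact q.Prime] {n : ℕ}

lemma dvd_pow_entries {R : Type*} [CommRing R] {N : ℕ} {d : R}
    {M : Matrix (Fin N) (Fin N) R} (hM : ∀ a b, d ∣ M a b) :
    ∀ r : ℕ, 1 ≤ r → ∀ a b, d ^ r ∣ (M ^ r) a b := by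
  intro r
  induction r with
  | zero => intro h; omega
  | succ r ih =>
    intro _ a b
    rcases Nat.eq_zero_or_pos r with rfl | hr
    · simpa using hM a b
    · rw [pow_succ, pow_succ, Matrix.mul_apply]
      exact Finset.dvd_sum fun c _ => mul_dvd_mul (ih hr a c) (hM c b)

lemma step (i : ℕ) (hi : 1 ≤ i) (X : Matrix (Fin n) (Fin n) ℤ_[q])
    (hX : ∀ a b, ((q : ℤ_[q]) ^ i) ∣ (X - 1) a b) :
    ∀ a b, ((q : ℤ_[q]) ^ (i + 1)) ∣ (X ^ q - 1) a b := by
  intro a b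
  set C : Matrix (Fin n) (Fin n) ℤ_[q] := X - 1 with hC
  have hX1 : X = C + 1 := by rw [hC, sub_add_cancel]
  have hbin : X ^ q = ∑ m ∈ Finset.range (q + 1),
      C ^ m * 1 ^ (q - m) * (q.choose m : Matrix (Fin n) (Fin n) ℤ_[q]) := by
    rw [hX1]; exact (Commute.one_right C).add_pow q
  have h0 : X ^ q - 1 = ∑ m ∈ Finset.range q,
      C ^ (m + 1) * 1 ^ (q - (m + 1)) * (q.choose (m + 1) : Matrix (Fin n) (Fin n) ℤ_[q]) := by
    rw [hbin, Finset.sum_range_succ']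
    simp
  rw [h0, Matrix.sum_apply]
  refine Finset.dvd_sum ?_
  intro m _
  have hc : (C ^ (m + 1) * 1 ^ (q - (m + 1)) * (q.choose (m + 1) : Matrix (Fin n) (Fin n) ℤ_[q])) a b
      = (C ^ (m + 1)) a b * ((q.choose (m + 1) : ℕ) : ℤ_[q]) := by
    rw [one_pow, mul_one, ← Matrix.diagonal_natCast, Matrix.mul_diagonal]
  rw [hc]
  have hCpow : ((q : ℤ_[q]) ^ i) ^ (m + 1) ∣ (C ^ (m + 1)) a b :=
    dvd_pow_entries hX (m + 1) (Nat.succ_le_succ (Nat.zero_le m)) a b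
  rcases Nat.eq_zero_or_pos m with rfl | hm1
  · have h1 : ((q.choose 1 : ℕ) : ℤ_[q]) = (q : ℤ_[q]) := by rw [Nat.choose_one_right]
    rw [h1, pow_succ]
    refine mul_dvd_mul ?_ dvd_rfl
    simpa using hCpow
  · have hle : i + 1 ≤ i * (m + 1) := by nlinarith
    have : (q : ℤ_[q]) ^ (i + 1) ∣ ((q : ℤ_[q]) ^ i) ^ (m + 1) := by
      rw [← pow_mul]; exact pow_dvd_pow _ hle
    exact dvd_mul_of_dvd_left (this.trans hCpow) _

lemma cong_pow (y : Matrix.SpecialLinearGroup (Fin n) ℤ_[q])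
    (h1 : ∀ a b, (q : ℤ_[q]) ∣ ((y : Matrix (Fin n) (Fin n) ℤ_[q]) - 1) a b) :
    ∀ j : ℕ, ∀ a b, ((q : ℤ_[q]) ^ (j + 1)) ∣
      (((y : Matrix (Fin n) (Fin n) ℤ_[q]) ^ q ^ j) - 1) a b := by
  intro j
  induction j with
  | zero => simpa using h1
  | succ j ih =>
    have h2 : ((y : Matrix (Fin n) (Fin n) ℤ_[q]) ^ q ^ (j + 1))
        = ((y : Matrix (Fin n) (Fin n) ℤ_[q]) ^ q ^ j) ^ q := by
      rw [← pow_mul, pow_succ]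
    rw [h2]
    exact step (j + 1) (Nat.succ_le_succ (Nat.zero_le j)) _ ih

lemma eq_one_of_q_divisible (y : Matrix.SpecialLinearGroup (Fin n) ℤ_[q])
    (h1 : ∀ a b, (q : ℤ_[q]) ∣ ((y : Matrix (Fin n) (Fin n) ℤ_[q]) - 1) a b)
    (hdiv : ∀ k : ℕ, ∃ z : Matrix.SpecialLinearGroup (Fin n) ℤ_[q], z ^ q ^ k = y) :
    y = 1 := by
  have key : ∀ j : ℕ, Matrix.SpecialLinearGroup.map (PadicInt.toZModPow (j + 1)) y = 1 := by
    intro j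
    haveI : NeZero (q ^ (j + 1)) := ⟨pow_ne_zero _ hq.out.pos.ne'⟩
    set J := j + 1 with hJ
    set π := Matrix.SpecialLinearGroup.map (n := Fin n) (PadicInt.toZModPow (p := q) J) with hπ
    set c := Fintype.card (Matrix.SpecialLinearGroup (Fin n) (ZMod (q ^ J))) with hc
    obtain ⟨z, hz⟩ := hdiv c
    set g := π z with hg
    have ht0 : orderOf g ≠ 0 := (orderOf_pos g).ne'
    set t := orderOf g with hts
    set v := t.factorization q with hv
    set s := t / q ^ v with hs
    have htvs : q ^ v * s = t := Nat.ordProj_mul_ordCompl_eq_self t q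
    have hcop : Nat.Coprime q s := Nat.coprime_ordCompl hq.out ht0
    have hvc : v ≤ c := by
      have h1' : q ^ v ≤ t := Nat.le_of_dvd (Nat.pos_of_ne_zero ht0) (Nat.ordProj_dvd t q)
      have h2' : t ≤ c := (Nat.le_of_dvd Fintype.card_pos (orderOf_dvd_card))
      have h3' : v < q ^ v := Nat.lt_pow_self (n := v) hq.out.one_lt
      omega
    have hys : (π y) ^ s = 1 := by
      have hy : π y = g ^ q ^ c := by rw [hg, ← map_pow, hz]
      rw [hy, ← pow_mul]
      apply orderOf_dvd_iff_pow_eq_one.mp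
      rw [← hts, ← htvs]
      exact mul_dvd_mul (pow_dvd_pow q hvc) dvd_rfl
    have hyq : (π y) ^ q ^ j = 1 := by
      rw [← map_pow]
      apply Subtype.ext
      apply Matrix.ext
      intro a b
      have hdvd := cong_pow y h1 j a b
      obtain ⟨r, hr⟩ := hdvd
      have hval : ((y ^ q ^ j : Matrix.SpecialLinearGroup (Fin n) ℤ_[q]) :
          Matrix (Fin n) (Fin n) ℤ_[q]) = (y : Matrix (Fin n) (Fin n) ℤ_[q]) ^ q ^ j :=
        Matrix.SpecialLinearGroup.coe_pow y (q ^ j)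
      have hent : ((y : Matrix (Fin n) (Fin n) ℤ_[q]) ^ q ^ j) a b
          = (1 : Matrix (Fin n) (Fin n) ℤ_[q]) a b + (q : ℤ_[q]) ^ J * r := by
        rw [Matrix.sub_apply] at hr
        rw [hJ]; linear_combination hr
      show PadicInt.toZModPow J (((y ^ q ^ j : Matrix.SpecialLinearGroup (Fin n) ℤ_[q]) :
          Matrix (Fin n) (Fin n) ℤ_[q]) a b) = (1 : Matrix (Fin n) (Fin n) (ZMod (q ^ J))) a b
      rw [hval, hent, map_add, _root_.map_mul, map_pow, map_natCast]
      have hq0 : ((q : ZMod (q ^ J)) : ZMod (q ^ J)) ^ J = 0 := by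
        have : ((q ^ J : ℕ) : ZMod (q ^ J)) = 0 := ZMod.natCast_self _
        rwa [Nat.cast_pow] at this
      rw [hq0, zero_mul, add_zero]
      rcases eq_or_ne a b with rfl | hab
      · simp [Matrix.one_apply_eq]
      · simp [Matrix.one_apply_ne hab]
    have hord : orderOf (π y) = 1 := by
      have d1 : orderOf (π y) ∣ s := orderOf_dvd_of_pow_eq_one hys
      have d2 : orderOf (π y) ∣ q ^ j := orderOf_dvd_of_pow_eq_one hyq
      have : orderOf (π y) ∣ Nat.gcd (q ^ j) s := Nat.dvd_gcd d2 d1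
      have hcop' : Nat.Coprime (q ^ j) s := Nat.Coprime.pow_left j hcop
      rwa [hcop', Nat.dvd_one] at this
    exact orderOf_eq_one_iff.mp hord
  apply Subtype.ext
  apply Matrix.ext
  intro a b
  rw [Matrix.SpecialLinearGroup.coe_one]
  apply PadicInt.ext_of_toZModPow.mp
  intro J
  cases J with
  | zero =>
    have : Subsingleton (ZMod (q ^ 0)) := by
      rw [pow_zero]; exact inferInstanceAs (Subsingleton (ZMod 1))
    exact Subsingleton.elim _ _
  | succ j =>
    have := key j
    have hval := congrArg
      (fun w : Matrix.SpecialLinearGroup (Fin n) (ZMod (q ^ (j + 1))) => w.1 a b) this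
    have h2 : (PadicInt.toZModPow (p := q) (j + 1)) ((y : Matrix (Fin n) (Fin n) ℤ_[q]) a b)
        = (1 : Matrix (Fin n) (Fin n) (ZMod (q ^ (j + 1)))) a b := hval
    rw [h2]
    rcases eq_or_ne a b with rfl | hab
    · simp [Matrix.one_apply_eq]
    · simp [Matrix.one_apply_ne hab]

end NoEmbedAux


/-- No finite-index subgroup of `SL_m(ℤ_p)` embeds into `SL_n(ℤ_q)` for distinct primes
`p, q` and `m, n ≥ 2`. -/
theorem no_embedding_of_finiteIndex_subgroup_SL_padic
    (p q : ℕ) [Fact p.Prime] [Fact q.Prime] (hpq : p ≠ q)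
    (m n : ℕ) (hm : 2 ≤ m) (hn : 2 ≤ n)
    (K : Subgroup (Matrix.SpecialLinearGroup (Fin m) ℤ_[p])) (hK : K.FiniteIndex) :
    ¬ ∃ φ : K →* Matrix.SpecialLinearGroup (Fin n) ℤ_[q], Function.Injective φ := by
  rintro ⟨φ, hφ⟩
  haveI := hK
  set i0 : Fin m := ⟨0, by omega⟩ with hi0
  set i1 : Fin m := ⟨1, by omega⟩ with hi1
  have h01 : i0 ≠ i1 := by simp [hi0, hi1, Fin.ext_iff]
  -- the transvection one-parameter subgroup
  set T : ℤ_[p] → Matrix.SpecialLinearGroup (Fin m) ℤ_[p] :=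
    fun t => ⟨Matrix.transvection i0 i1 t, Matrix.det_transvection_of_ne i0 i1 h01 t⟩ with hT
  have Tmul : ∀ a b : ℤ_[p], T a * T b = T (a + b) := by
    intro a b
    apply Subtype.ext
    exact Matrix.transvection_mul_transvection_same i0 i1 h01 a b
  have Tpow : ∀ (k : ℕ) (a : ℤ_[p]), T a ^ k = T ((k : ℤ_[p]) * a) := by
    intro k a
    induction k with
    | zero =>
      apply Subtype.ext
      rw [pow_zero]
      simp [hT, Matrix.transvection_zero]
    | succ k ih =>
      rw [pow_succ, ih, Tmul]
      congr 1
      push_cast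
      ring
  have Tinj : ∀ a : ℤ_[p], T a = 1 → a = 0 := by
    intro a ha
    have := congrArg (fun w : Matrix.SpecialLinearGroup (Fin m) ℤ_[p] => w.1 i0 i1) ha
    simp only [hT] at this
    rw [Matrix.SpecialLinearGroup.coe_one] at this
    simpa [Matrix.transvection, Matrix.add_apply, Matrix.one_apply_ne h01,
      Matrix.single_apply_same] using this
  -- the normal core gives a uniform exponent landing in K
  set N := K.normalCore with hN
  haveI : N.FiniteIndex := K.finiteIndex_normalCore
  set d := N.index with hd
  have hd0 : d ≠ 0 := Subgroup.FiniteIndex.index_ne_zero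
  have hmem : ∀ g : Matrix.SpecialLinearGroup (Fin m) ℤ_[p], g ^ d ∈ K :=
    fun g => K.normalCore_le (N.pow_index_mem g)
  -- q is a unit in ℤ_[p]
  have hqu : IsUnit (q : ℤ_[p]) := by
    rw [PadicInt.isUnit_iff]
    refine le_antisymm (PadicInt.norm_le_one _) ?_
    by_contra hlt
    push_neg at hlt
    have : ((q : ℤ) : ℤ_[p]) = (q : ℤ_[p]) := by push_cast; ring
    rw [← this, PadicInt.norm_int_lt_one_iff_dvd] at hlt
    have : p ∣ q := Int.ofNat_dvd.mp hlt
    exact hpq ((Nat.prime_dvd_prime_iff_eq (Fact.out) (Fact.out)).mp this)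
  obtain ⟨w, hw⟩ := hqu
  -- elements of K with compatible q-power roots
  set tk : ℕ → ℤ_[p] := fun k => (d : ℤ_[p]) * ((w⁻¹ : ℤ_[p]ˣ) : ℤ_[p]) ^ k with htk
  have hTk : ∀ k, T (tk k) ∈ K := by
    intro k
    have : T (((w⁻¹ : ℤ_[p]ˣ) : ℤ_[p]) ^ k) ^ d = T (tk k) := by rw [Tpow]
    rw [← this]
    exact hmem _
  have hroot : ∀ k : ℕ, T (tk k) ^ q ^ k = T (tk 0) := by
    intro k
    rw [Tpow]
    congr 1
    have h1 : ((q ^ k : ℕ) : ℤ_[p]) = (w : ℤ_[p]) ^ k := by push_cast [hw]; ring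
    rw [h1, htk]
    simp only [pow_zero, mul_one]
    rw [mul_comm ((w : ℤ_[p]) ^ k), mul_assoc]
    have : ((w⁻¹ : ℤ_[p]ˣ) : ℤ_[p]) ^ k * (w : ℤ_[p]) ^ k = 1 := by
      rw [← mul_pow]
      norm_cast
      rw [inv_mul_cancel]
      simp
    rw [this, mul_one]
  set uk : ℕ → K := fun k => ⟨T (tk k), hTk k⟩ with huk
  have hrootK : ∀ k : ℕ, uk k ^ q ^ k = uk 0 := by
    intro k
    apply Subtype.ext
    simpa using hroot k
  -- pass to SL_n(ℤ_q)
  haveI : NeZero (q ^ 1) := ⟨pow_ne_zero _ (Fact.out (p := q.Prime)).pos.ne'⟩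
  set c₁ := Fintype.card (Matrix.SpecialLinearGroup (Fin n) (ZMod (q ^ 1))) with hc₁
  set y : Matrix.SpecialLinearGroup (Fin n) ℤ_[q] := φ (uk 0) ^ c₁ with hy
  have h1 : ∀ a b, (q : ℤ_[q]) ∣ ((y : Matrix (Fin n) (Fin n) ℤ_[q]) - 1) a b := by
    intro a b
    have hone : Matrix.SpecialLinearGroup.map (PadicInt.toZModPow (p := q) 1) y = 1 := by
      rw [hy, map_pow]
      exact pow_card_eq_one
    have hval := congrArg
      (fun w : Matrix.SpecialLinearGroup (Fin n) (ZMod (q ^ 1)) => w.1 a b) hone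
    have h2 : (PadicInt.toZModPow (p := q) 1) ((y : Matrix (Fin n) (Fin n) ℤ_[q]) a b)
        = (1 : Matrix (Fin n) (Fin n) (ZMod (q ^ 1))) a b := hval
    have h3 : (PadicInt.toZModPow (p := q) 1) (((y : Matrix (Fin n) (Fin n) ℤ_[q]) - 1) a b) = 0 := by
      rw [Matrix.sub_apply, map_sub, h2]
      rcases eq_or_ne a b with rfl | hab
      · simp [Matrix.one_apply_eq]
      · simp [Matrix.one_apply_ne hab]
    have h4 : ((y : Matrix (Fin n) (Fin n) ℤ_[q]) - 1) a b ∈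
        RingHom.ker (PadicInt.toZModPow (p := q) 1) := h3
    rw [PadicInt.ker_toZModPow] at h4
    have h5 := Ideal.mem_span_singleton.mp h4
    rwa [pow_one] at h5
  have hdiv : ∀ k : ℕ, ∃ z : Matrix.SpecialLinearGroup (Fin n) ℤ_[q], z ^ q ^ k = y := by
    intro k
    refine ⟨φ (uk k) ^ c₁, ?_⟩
    rw [← pow_mul, mul_comm, pow_mul, ← map_pow, hrootK k, hy]
  have hy1 : y = 1 := NoEmbedAux.eq_one_of_q_divisible y h1 hdiv
  -- derive the contradiction
  have : uk 0 ^ c₁ = 1 := by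
    apply hφ
    rw [map_pow, _root_.map_one, ← hy, hy1]
  have hG : T (tk 0) ^ c₁ = 1 := by
    have := congrArg (Subtype.val (p := fun x => x ∈ K)) this
    simpa [huk] using this
  rw [Tpow] at hG
  have h0 : (c₁ : ℤ_[p]) * tk 0 = 0 := Tinj _ hG
  have hc₁0 : (c₁ : ℤ_[p]) ≠ 0 := by
    have : 0 < c₁ := Fintype.card_pos
    exact_mod_cast Nat.cast_ne_zero.mpr this.ne'
  have htk0 : tk 0 ≠ 0 := by
    rw [htk]
    simp only [pow_zero, mul_one]
    exact_mod_cast Nat.cast_ne_zero.mpr hd0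
  exact (mul_ne_zero hc₁0 htk0) h0
end

section
/- For every m ≥ 2, every prime p, and every k ≥ 1, every open (equivalently, finite-index) subgroup of SL_m(ℤ_p) contains the kernel of the reduction map SL_m(ℤ_p) → SL_m(ℤ/p^kℤ) for some k; that is, every finite-index subgroup of SL_m(ℤ_p) contains a principal congruence subgroup. -/
open Matrix PadicInt

namespace PCSAux

variable {p : ℕ} [Fact p.Prime] {m : ℕ}

/-- Elementary transvection as an element of `SL_m(ℤ_p)`. -/
noncomputable def elemSL (i j : Fin m) (h : i ≠ j) (t : ℤ_[p]) :
    Matrix.SpecialLinearGroup (Fin m) ℤ_[p] :=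
  ⟨Matrix.transvection i j t, Matrix.det_transvection_of_ne i j h t⟩

lemma elemSL_pow (i j : Fin m) (h : i ≠ j) (t : ℤ_[p]) (n : ℕ) :
    elemSL i j h t ^ n = elemSL i j h ((n : ℤ_[p]) * t) := by
  induction n with
  | zero =>
    rw [pow_zero]
    apply Subtype.ext
    simp [elemSL, Matrix.SpecialLinearGroup.coe_pow]
  | succ n ih =>
    rw [pow_succ, ih]
    apply Subtype.ext
    rw [Matrix.SpecialLinearGroup.coe_mul]
    show Matrix.transvection i j _ * Matrix.transvection i j _ = Matrix.transvection i j _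
    rw [Matrix.transvection_mul_transvection_same _ _ h]
    push_cast
    ring_nf

/-- Index `c+1`. -/
def succIdx (c : Fin m) (h : (c : ℕ) + 1 < m) : Fin m := ⟨(c : ℕ) + 1, h⟩

lemma succIdx_ne (c : Fin m) (h : (c : ℕ) + 1 < m) : c ≠ succIdx c h := by
  intro hc
  have := congrArg Fin.val hc
  simp [succIdx] at this

/-- The diagonal function for `diagSL`. -/
noncomputable def diagFun (c : Fin m) (h : (c : ℕ) + 1 < m) (v : ℤ_[p]ˣ) : Fin m → ℤ_[p] :=
  fun i => if i = c then (v : ℤ_[p]) else if i = succIdx c h then ((v⁻¹ : ℤ_[p]ˣ) : ℤ_[p]) else 1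

lemma diagFun_det (c : Fin m) (h : (c : ℕ) + 1 < m) (v : ℤ_[p]ˣ) :
    (Matrix.diagonal (diagFun c h v)).det = 1 := by
  rw [Matrix.det_diagonal]
  have hne : c ≠ succIdx c h := succIdx_ne c h
  rw [← Finset.prod_subset (Finset.subset_univ ({c, succIdx c h} : Finset (Fin m)))
    (by
      intro i _ hi
      simp only [Finset.mem_insert, Finset.mem_singleton, not_or] at hi
      simp [diagFun, hi.1, hi.2])]
  rw [Finset.prod_pair hne]
  simp [diagFun, hne, (succIdx_ne c h).symm]

/-- Diagonal matrix `diag(1,…,v,v⁻¹,…,1)` as an element of `SL_m(ℤ_p)`. -/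
noncomputable def diagSL (c : Fin m) (h : (c : ℕ) + 1 < m) (v : ℤ_[p]ˣ) :
    Matrix.SpecialLinearGroup (Fin m) ℤ_[p] :=
  ⟨Matrix.diagonal (diagFun c h v), diagFun_det c h v⟩

lemma diagSL_pow (c : Fin m) (h : (c : ℕ) + 1 < m) (v : ℤ_[p]ˣ) (n : ℕ) :
    diagSL c h v ^ n = diagSL c h (v ^ n) := by
  apply Subtype.ext
  rw [Matrix.SpecialLinearGroup.coe_pow]
  show (Matrix.diagonal (diagFun c h v)) ^ n = Matrix.diagonal (diagFun c h (v ^ n))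
  rw [Matrix.diagonal_pow]
  funext i j
  rw [Matrix.diagonal_apply, Matrix.diagonal_apply]
  have : (diagFun c h v ^ n) i = (diagFun c h v i) ^ n := rfl
  by_cases hij : i = j <;> simp only [hij, if_true, if_false, this]
  unfold diagFun
  by_cases h1 : j = c
  · simp [h1, Units.val_pow_eq_pow_val]
  · by_cases h2 : j = succIdx c h
    · have hne : ¬ succIdx c h = c := fun e => succIdx_ne c h e.symm
      simp [h1, h2, hne]
    · simp [h1, h2]


section Ker

variable (k : ℕ)

local notation "SL" => Matrix.SpecialLinearGroup (Fin m) ℤ_[p]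

/-- Membership in the principal congruence subgroup in terms of divisibility of entries. -/
lemma mem_ker_iff (x : SL) :
    x ∈ (Matrix.SpecialLinearGroup.map (n := Fin m) (PadicInt.toZModPow (p := p) k)).ker ↔
      ∀ i j : Fin m, (p : ℤ_[p]) ^ k ∣
        ((x : Matrix (Fin m) (Fin m) ℤ_[p]) i j - (1 : Matrix (Fin m) (Fin m) ℤ_[p]) i j) := by
  have hz : ∀ z : ℤ_[p], toZModPow (p := p) k z = 0 ↔ (p : ℤ_[p]) ^ k ∣ z := fun z => by
    rw [← RingHom.mem_ker, PadicInt.ker_toZModPow, Ideal.mem_span_singleton]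
  constructor
  · intro hx i j
    rw [← hz, map_sub]
    have h1 : (Matrix.SpecialLinearGroup.map (n := Fin m) (PadicInt.toZModPow (p := p) k) x :
        Matrix (Fin m) (Fin m) (ZMod (p ^ k))) = 1 := by
      rw [MonoidHom.mem_ker] at hx
      rw [hx]
      rfl
    have h2 : toZModPow (p := p) k ((x : Matrix (Fin m) (Fin m) ℤ_[p]) i j)
        = (1 : Matrix (Fin m) (Fin m) (ZMod (p ^ k))) i j := by
      rw [← h1]
      rfl
    rw [h2]
    by_cases hij : i = j <;> simp [Matrix.one_apply, hij]
  · intro hx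
    rw [MonoidHom.mem_ker]
    apply Subtype.ext
    show (PadicInt.toZModPow (p := p) k).mapMatrix (x : Matrix (Fin m) (Fin m) ℤ_[p])
        = (1 : Matrix (Fin m) (Fin m) (ZMod (p ^ k)))
    ext i j
    have h3 := (hz _).2 (hx i j)
    rw [map_sub, sub_eq_zero] at h3
    rw [RingHom.mapMatrix_apply, Matrix.map_apply, h3]
    by_cases hij : i = j <;> simp [Matrix.one_apply, hij]

lemma elemSL_mem_ker (i j : Fin m) (h : i ≠ j) (t : ℤ_[p]) (ht : (p : ℤ_[p]) ^ k ∣ t) :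
    elemSL i j h t ∈ (Matrix.SpecialLinearGroup.map (n := Fin m)
      (PadicInt.toZModPow (p := p) k)).ker := by
  rw [mem_ker_iff]
  intro a b
  show (p : ℤ_[p]) ^ k ∣ Matrix.transvection i j t a b - (1 : Matrix (Fin m) (Fin m) ℤ_[p]) a b
  rw [Matrix.transvection, Matrix.add_apply, add_sub_cancel_left]
  rw [Matrix.single]
  show (p : ℤ_[p]) ^ k ∣ if i = a ∧ j = b then t else 0
  split_ifs
  · exact ht
  · exact dvd_zero _

lemma dvd_inv_sub_one {v : ℤ_[p]ˣ} (hv : (p : ℤ_[p]) ^ k ∣ (v : ℤ_[p]) - 1) :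
    (p : ℤ_[p]) ^ k ∣ ((v⁻¹ : ℤ_[p]ˣ) : ℤ_[p]) - 1 := by
  have : ((v⁻¹ : ℤ_[p]ˣ) : ℤ_[p]) - 1 = ((v⁻¹ : ℤ_[p]ˣ) : ℤ_[p]) * (1 - (v : ℤ_[p])) := by
    have hvv : ((v⁻¹ : ℤ_[p]ˣ) : ℤ_[p]) * (v : ℤ_[p]) = 1 := by
      rw [← Units.val_mul, inv_mul_cancel, Units.val_one]
    rw [mul_sub, mul_one, hvv]
  rw [this]
  exact Dvd.dvd.mul_left (by rwa [← neg_sub, dvd_neg]) _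

lemma diagSL_mem_ker (c : Fin m) (h : (c : ℕ) + 1 < m) (v : ℤ_[p]ˣ)
    (hv : (p : ℤ_[p]) ^ k ∣ (v : ℤ_[p]) - 1) :
    diagSL c h v ∈ (Matrix.SpecialLinearGroup.map (n := Fin m)
      (PadicInt.toZModPow (p := p) k)).ker := by
  rw [mem_ker_iff]
  intro a b
  show (p : ℤ_[p]) ^ k ∣
    Matrix.diagonal (diagFun c h v) a b - (1 : Matrix (Fin m) (Fin m) ℤ_[p]) a b
  by_cases hab : a = b
  · subst hab
    rw [Matrix.diagonal_apply_eq, Matrix.one_apply_eq]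
    unfold diagFun
    split_ifs
    · exact hv
    · exact dvd_inv_sub_one k hv
    · simp
  · rw [Matrix.diagonal_apply_ne _ hab, Matrix.one_apply_ne hab]
    simp

lemma isUnit_of_norm_sub_one_lt {u : ℤ_[p]} (h1 : ‖u - 1‖ < 1) : IsUnit u := by
  rw [PadicInt.isUnit_iff]
  by_contra hne
  have hlt : ‖u‖ < 1 := lt_of_le_of_ne (PadicInt.norm_le_one u) hne
  have hge : (1 : ℝ) ≤ max ‖u‖ ‖u - 1‖ := by
    have h2 : (1 : ℝ) = ‖u + -(u - 1)‖ := by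
      rw [← sub_eq_add_neg, sub_sub_cancel, norm_one]
    rw [h2]
    refine le_trans (PadicInt.nonarchimedean _ _) ?_
    rw [norm_neg]
  exact absurd hge (not_le.2 (max_lt hlt h1))

lemma isUnit_of_dvd_sub_one {k : ℕ} (hk : 1 ≤ k) {u : ℤ_[p]}
    (hu : (p : ℤ_[p]) ^ k ∣ u - 1) : IsUnit u := by
  have hp : (1 : ℝ) < p := by exact_mod_cast (Fact.out : p.Prime).one_lt
  refine isUnit_of_norm_sub_one_lt ?_
  have hle : ‖u - 1‖ ≤ (p : ℝ) ^ (-(k : ℤ)) :=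
    (PadicInt.norm_le_pow_iff_mem_span_pow (u - 1) k).2 (Ideal.mem_span_singleton.2 hu)
  refine lt_of_le_of_lt hle ?_
  rw [_root_.zpow_neg, zpow_natCast]
  rw [inv_lt_one_iff₀]
  right
  exact one_lt_pow₀ hp (by omega)

lemma one_add_sum_mul_apply (s : Finset (Fin m)) (c : Fin m) (f : Fin m → ℤ_[p])
    (M : Matrix (Fin m) (Fin m) ℤ_[p]) (a b : Fin m) :
    ((1 + ∑ i ∈ s, Matrix.single i c (f i)) * M) a b
      = M a b + (if a ∈ s then f a * M c b else 0) := by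
  classical
  rw [Matrix.add_mul, Matrix.one_mul, Matrix.add_apply]
  congr 1
  rw [Matrix.sum_mul, Matrix.sum_apply]
  by_cases ha : a ∈ s
  · rw [if_pos ha]
    rw [Finset.sum_eq_single_of_mem a ha]
    · rw [Matrix.single_mul_apply_same]
    · intro i _ hia
      rw [Matrix.single_mul_apply_of_ne _ _ _ _ _ (Ne.symm hia)]
  · rw [if_neg ha]
    refine Finset.sum_eq_zero fun i hi => ?_
    rw [Matrix.single_mul_apply_of_ne _ _ _ _ _ (fun hai => ha (by rw [hai]; exact hi))]

lemma clearCol (N : Subgroup (Matrix.SpecialLinearGroup (Fin m) ℤ_[p]))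
    (hE : ∀ (i j : Fin m) (h : i ≠ j) (t : ℤ_[p]), (p : ℤ_[p]) ^ k ∣ t → elemSL i j h t ∈ N)
    (c : Fin m) (f : Fin m → ℤ_[p]) (hf : ∀ i, (p : ℤ_[p]) ^ k ∣ f i)
    (s : Finset (Fin m)) (hc : c ∉ s) :
    ∃ g : Matrix.SpecialLinearGroup (Fin m) ℤ_[p], g ∈ N ∧
      g ∈ (Matrix.SpecialLinearGroup.map (n := Fin m) (PadicInt.toZModPow (p := p) k)).ker ∧
      (g : Matrix (Fin m) (Fin m) ℤ_[p]) = 1 + ∑ i ∈ s, Matrix.single i c (f i) := by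
  classical
  revert hc
  induction s using Finset.induction_on with
  | empty =>
    intro _
    exact ⟨1, N.one_mem, Subgroup.one_mem _, by simp⟩
  | @insert a s' ha ih =>
    intro hc
    have hca : a ≠ c := fun e => hc (by rw [← e]; exact Finset.mem_insert_self a s')
    have hcs' : c ∉ s' := fun hcs => hc (Finset.mem_insert_of_mem hcs)
    obtain ⟨g', hg'N, hg'ker, hg'coe⟩ := ih hcs'
    refine ⟨elemSL a c hca (f a) * g', N.mul_mem (hE a c hca (f a) (hf a)) hg'N,
      Subgroup.mul_mem _ (elemSL_mem_ker k a c hca (f a) (hf a)) hg'ker, ?_⟩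
    rw [Matrix.SpecialLinearGroup.coe_mul, hg'coe]
    show Matrix.transvection a c (f a) * _ = _
    rw [Matrix.transvection, Finset.sum_insert ha, Matrix.add_mul, Matrix.one_mul,
      Matrix.mul_add, Matrix.mul_one, Finset.mul_sum]
    rw [Finset.sum_eq_zero (fun i hi =>
      Matrix.single_mul_single_of_ne (f a) a c i (fun hci => hcs' (by rw [hci]; exact hi)) _)]
    abel

lemma elimination (hk : 1 ≤ k) (N : Subgroup (Matrix.SpecialLinearGroup (Fin m) ℤ_[p]))
    (hE : ∀ (i j : Fin m) (h : i ≠ j) (t : ℤ_[p]), (p : ℤ_[p]) ^ k ∣ t → elemSL i j h t ∈ N)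
    (hD : ∀ (c : Fin m) (h : (c : ℕ) + 1 < m) (v : ℤ_[p]ˣ),
      (p : ℤ_[p]) ^ k ∣ (v : ℤ_[p]) - 1 → diagSL c h v ∈ N) :
    ∀ (d r : ℕ), r + d = m → ∀ x : Matrix.SpecialLinearGroup (Fin m) ℤ_[p],
      x ∈ (Matrix.SpecialLinearGroup.map (n := Fin m) (PadicInt.toZModPow (p := p) k)).ker →
      (∀ i j : Fin m, (j : ℕ) < r → i ≠ j → (x : Matrix (Fin m) (Fin m) ℤ_[p]) i j = 0) →
      (∀ j : Fin m, (j : ℕ) < r → (x : Matrix (Fin m) (Fin m) ℤ_[p]) j j = 1) →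
      x ∈ N := by
  intro d
  induction d with
  | zero =>
    intro r hr x hker hoff hdiag
    have hx1 : x = 1 := by
      apply Subtype.ext
      ext i j
      rw [Matrix.SpecialLinearGroup.coe_one]
      by_cases hij : i = j
      · subst hij
        rw [hdiag i (by have := i.isLt; omega), Matrix.one_apply_eq]
      · rw [hoff i j (by have := j.isLt; omega) hij, Matrix.one_apply_ne hij]
    rw [hx1]
    exact N.one_mem
  | succ d ih =>
    intro r hr x hker hoff hdiag
    have hrm : r < m := by omega
    have hc : (⟨r, hrm⟩ : Fin m) = ⟨r, hrm⟩ := rfl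
    set c : Fin m := ⟨r, hrm⟩ with hcdef
    have hcv : (c : ℕ) = r := rfl
    have step : ∀ y : Matrix.SpecialLinearGroup (Fin m) ℤ_[p],
        y ∈ (Matrix.SpecialLinearGroup.map (n := Fin m)
          (PadicInt.toZModPow (p := p) k)).ker →
        (∀ i j : Fin m, (j : ℕ) < r → i ≠ j → (y : Matrix (Fin m) (Fin m) ℤ_[p]) i j = 0) →
        (∀ j : Fin m, (j : ℕ) < r → (y : Matrix (Fin m) (Fin m) ℤ_[p]) j j = 1) →
        (y : Matrix (Fin m) (Fin m) ℤ_[p]) c c = 1 → y ∈ N := by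
      intro y hyker hyoff hydiag hypiv
      classical
      set f : Fin m → ℤ_[p] :=
        fun i => if i = c then 0 else -((y : Matrix (Fin m) (Fin m) ℤ_[p]) i c) with hf
      have hfd : ∀ i, (p : ℤ_[p]) ^ k ∣ f i := by
        intro i
        by_cases hic : i = c
        · simp [hf, hic]
        · rw [hf]
          simp only [hic, if_false]
          rw [dvd_neg]
          have h5 := (mem_ker_iff k y).1 hyker i c
          rwa [Matrix.one_apply_ne hic, sub_zero] at h5
      obtain ⟨g, hgN, hgker, hgcoe⟩ :=
        clearCol k N hE c f hfd (Finset.univ.erase c) (Finset.notMem_erase c _)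
      have hz : ∀ a b, ((g * y : Matrix.SpecialLinearGroup (Fin m) ℤ_[p]) :
            Matrix (Fin m) (Fin m) ℤ_[p]) a b
          = (y : Matrix (Fin m) (Fin m) ℤ_[p]) a b +
            (if a = c then 0 else f a * (y : Matrix (Fin m) (Fin m) ℤ_[p]) c b) := by
        intro a b
        rw [Matrix.SpecialLinearGroup.coe_mul, hgcoe, one_add_sum_mul_apply]
        congr 1
        by_cases hac : a = c
        · simp [hac]
        · simp [hac, Finset.mem_erase]
      have hzN : (g * y) ∈ N := by
        refine ih (r + 1) (by omega) (g * y) (Subgroup.mul_mem _ hgker hyker) ?_ ?_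
        · intro i j hj hij
          rw [hz]
          rcases (by omega : (j : ℕ) < r ∨ (j : ℕ) = r) with hjr | hjr
          · have hcj : c ≠ j := fun e => by
              have := congrArg Fin.val e; rw [hcv] at this; omega
            rw [hyoff i j hjr hij, hyoff c j hjr hcj, mul_zero]
            simp
          · have hjc : j = c := Fin.ext (by rw [hjr, hcv])
            have hic : ¬ i = c := fun e => hij (by rw [e, ← hjc])
            rw [hjc, if_neg hic, hypiv, mul_one, hf]
            simp only [hic, if_false]
            ring
        · intro j hj
          rw [hz]
          rcases (by omega : (j : ℕ) < r ∨ (j : ℕ) = r) with hjr | hjr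
          · have hcj : c ≠ j := fun e => by
              have := congrArg Fin.val e; rw [hcv] at this; omega
            rw [hydiag j hjr, hyoff c j hjr hcj]
            by_cases hjc2 : j = c
            · simp [hjc2]
            · simp [hjc2]
          · have hjc : j = c := Fin.ext (by rw [hjr, hcv])
            rw [hjc, if_pos rfl, hypiv, add_zero]
      have hy2 : y = g⁻¹ * (g * y) := by rw [inv_mul_cancel_left]
      rw [hy2]
      exact N.mul_mem (N.inv_mem hgN) hzN
    by_cases hc1 : r + 1 < m
    · have hc1' : (c : ℕ) + 1 < m := by rw [hcv]; exact hc1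
      have hu : (p : ℤ_[p]) ^ k ∣ (x : Matrix (Fin m) (Fin m) ℤ_[p]) c c - 1 := by
        have h6 := (mem_ker_iff k x).1 hker c c
        rwa [Matrix.one_apply_eq] at h6
      obtain ⟨w, hw⟩ := isUnit_of_dvd_sub_one hk hu
      have hwv : (p : ℤ_[p]) ^ k ∣ (w : ℤ_[p]) - 1 := by rw [hw]; exact hu
      have hwinv := dvd_inv_sub_one k hwv
      have hg1N : diagSL c hc1' w⁻¹ ∈ N := hD c hc1' w⁻¹ hwinv
      have hg1ker := diagSL_mem_ker k c hc1' w⁻¹ hwinv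
      have hyent : ∀ a b, ((diagSL c hc1' w⁻¹ * x : Matrix.SpecialLinearGroup (Fin m) ℤ_[p]) :
            Matrix (Fin m) (Fin m) ℤ_[p]) a b
          = diagFun c hc1' w⁻¹ a * (x : Matrix (Fin m) (Fin m) ℤ_[p]) a b := by
        intro a b
        rw [Matrix.SpecialLinearGroup.coe_mul]
        show (Matrix.diagonal (diagFun c hc1' w⁻¹) * (x : Matrix (Fin m) (Fin m) ℤ_[p])) a b = _
        rw [Matrix.diagonal_mul]
      have hyN : (diagSL c hc1' w⁻¹ * x) ∈ N := by
        refine step _ (Subgroup.mul_mem _ hg1ker hker) ?_ ?_ ?_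
        · intro i j hj hij
          rw [hyent, hoff i j hj hij, mul_zero]
        · intro j hj
          rw [hyent, hdiag j hj, mul_one]
          unfold diagFun
          rw [if_neg, if_neg]
          · exact fun e => by
              have := congrArg Fin.val e
              simp only [succIdx, hcv] at this
              omega
          · exact fun e => by
              have := congrArg Fin.val e; rw [hcv] at this; omega
        · rw [hyent]
          unfold diagFun
          rw [if_pos rfl, ← hw, ← Units.val_mul, inv_mul_cancel, Units.val_one]
      have hx2 : x = (diagSL c hc1' w⁻¹)⁻¹ * (diagSL c hc1' w⁻¹ * x) := by
        rw [inv_mul_cancel_left]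
      rw [hx2]
      exact N.mul_mem (N.inv_mem hg1N) hyN
    · have hpiv : (x : Matrix (Fin m) (Fin m) ℤ_[p]) c c = 1 := by
        have hdet : (x : Matrix (Fin m) (Fin m) ℤ_[p]).det = 1 := x.2
        have htri : ((x : Matrix (Fin m) (Fin m) ℤ_[p])).BlockTriangular id := by
          intro i j hij
          have hij' : (j : ℕ) < (i : ℕ) := hij
          refine hoff i j (by have := i.isLt; omega) ?_
          exact fun e => by rw [e] at hij'; omega
        rw [Matrix.det_of_upperTriangular htri] at hdet
        rwa [Finset.prod_eq_single c
          (fun b _ hbc => hdiag b (by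
            have hb := b.isLt
            have : (b : ℕ) ≠ r := fun e => hbc (Fin.ext (by rw [e, hcv]))
            omega))
          (fun h => absurd (Finset.mem_univ c) h)] at hdet
      exact step x hker hoff hdiag hpiv

end Ker

section Root

lemma natCast_factor (n : ℕ) (hn : n ≠ 0) :
    (n : ℤ_[p]) = (p : ℤ_[p]) ^ (padicValNat p n) * ((n / p ^ padicValNat p n : ℕ) : ℤ_[p]) ∧
      IsUnit ((n / p ^ padicValNat p n : ℕ) : ℤ_[p]) := by
  have hfact : p.Prime := Fact.out
  have hfac : p ^ padicValNat p n * (n / p ^ padicValNat p n) = n := by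
    rw [← Nat.factorization_def n hfact]
    exact Nat.ordProj_mul_ordCompl_eq_self n p
  constructor
  · conv_lhs => rw [← hfac]
    push_cast
    ring
  · rw [PadicInt.isUnit_iff]
    have hnd : ¬ p ∣ (n / p ^ padicValNat p n) := by
      rw [← Nat.factorization_def n hfact]
      exact Nat.not_dvd_ordCompl hfact hn
    have hlt := PadicInt.norm_int_lt_one_iff_dvd (p := p) ((n / p ^ padicValNat p n : ℕ) : ℤ)
    have hcast : (((n / p ^ padicValNat p n : ℕ) : ℤ) : ℤ_[p])
        = ((n / p ^ padicValNat p n : ℕ) : ℤ_[p]) := by exact_mod_cast rfl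
    rw [hcast] at hlt
    refine le_antisymm (PadicInt.norm_le_one _) (not_lt.1 fun hlt1 => hnd ?_)
    exact_mod_cast hlt.1 hlt1

lemma norm_natCast_eq (n : ℕ) (hn : n ≠ 0) :
    ‖(n : ℤ_[p])‖ = (p : ℝ) ^ (-(padicValNat p n : ℤ)) := by
  obtain ⟨heq, hu⟩ := natCast_factor (p := p) n hn
  rw [heq, norm_mul, PadicInt.norm_p_pow, (PadicInt.isUnit_iff).1 hu, mul_one]

lemma exists_pow_eq (n : ℕ) (hn : n ≠ 0) (u : ℤ_[p]ˣ)
    (hu : (p : ℤ_[p]) ^ (2 * padicValNat p n + 1) ∣ (u : ℤ_[p]) - 1) :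
    ∃ v : ℤ_[p]ˣ, v ^ n = u := by
  have hp1 : (1 : ℝ) < p := by exact_mod_cast (Fact.out : p.Prime).one_lt
  set a := padicValNat p n with ha
  set F : Polynomial ℤ_[p] := Polynomial.X ^ n - Polynomial.C (u : ℤ_[p]) with hF
  have hev1 : F.eval 1 = 1 - (u : ℤ_[p]) := by simp [hF]
  have hevd : F.derivative.eval 1 = (n : ℤ_[p]) := by
    simp [hF, Polynomial.derivative_X_pow]
  have hnorm : ‖F.eval 1‖ < ‖F.derivative.eval 1‖ ^ 2 := by
    rw [hev1, hevd, norm_natCast_eq n hn, ← ha]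
    have h1 : ‖(1 : ℤ_[p]) - (u : ℤ_[p])‖ ≤ (p : ℝ) ^ (-((2 * a + 1 : ℕ) : ℤ)) := by
      rw [norm_sub_rev]
      exact (PadicInt.norm_le_pow_iff_mem_span_pow ((u : ℤ_[p]) - 1) (2 * a + 1)).2
        (Ideal.mem_span_singleton.2 hu)
    refine lt_of_le_of_lt h1 ?_
    have h3 : ((p : ℝ) ^ (-(a : ℤ))) ^ 2 = (p : ℝ) ^ (-(2 * a : ℕ) : ℤ) := by
      rw [← zpow_natCast ((p : ℝ) ^ (-(a : ℤ))) 2, ← _root_.zpow_mul]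
      congr 1
      push_cast
      ring
    rw [h3]
    apply zpow_lt_zpow_right₀ hp1
    push_cast
    omega
  obtain ⟨z, hz0, hz1, -, -⟩ := hensels_lemma hnorm
  have hzn : z ^ n = (u : ℤ_[p]) := by
    rw [hF] at hz0
    simpa [sub_eq_zero] using hz0
  have hzu : IsUnit z := by
    refine isUnit_of_norm_sub_one_lt ?_
    refine lt_of_lt_of_le hz1 ?_
    rw [Polynomial.coe_aeval_eq_eval, hevd]
    exact PadicInt.norm_le_one _
  obtain ⟨v, hv⟩ := hzu
  refine ⟨v, Units.ext ?_⟩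
  rw [Units.val_pow_eq_pow_val, hv, hzn]

end Root

end PCSAux

/-- Every finite-index subgroup of `SL_m(ℤ_p)` contains a principal congruence subgroup,
i.e. the kernel of the reduction map `SL_m(ℤ_p) → SL_m(ℤ/p^kℤ)` for some `k`. -/
theorem finiteIndex_subgroup_contains_principal_congruence_subgroup
    (p : ℕ) [Fact p.Prime] (m : ℕ) (hm : 2 ≤ m)
    (K : Subgroup (Matrix.SpecialLinearGroup (Fin m) ℤ_[p])) (hK : K.FiniteIndex) :
    ∃ k : ℕ, 1 ≤ k ∧
      (Matrix.SpecialLinearGroup.map (n := Fin m) (PadicInt.toZModPow (p := p) k)).ker ≤ K := by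
  classical
  haveI := hK
  set N := K.normalCore with hNdef
  have hNK : N ≤ K := K.normalCore_le
  haveI : N.Normal := K.normalCore_normal
  haveI hNfi : N.FiniteIndex := inferInstance
  set n := N.index with hndef
  have hn0 : n ≠ 0 := hNfi.index_ne_zero
  set a := padicValNat p n with hadef
  set k := 2 * a + 1 with hkdef
  have hk1 : 1 ≤ k := by omega
  refine ⟨k, hk1, ?_⟩
  intro x hx
  apply hNK
  obtain ⟨heq, hwunit⟩ := PCSAux.natCast_factor (p := p) n hn0
  have hdvd_pa : (n : ℤ_[p]) ∣ (p : ℤ_[p]) ^ a := by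
    obtain ⟨wu, hwu⟩ := hwunit
    refine ⟨((wu⁻¹ : ℤ_[p]ˣ) : ℤ_[p]), ?_⟩
    rw [heq, ← hwu, mul_assoc, ← Units.val_mul, mul_inv_cancel, Units.val_one, mul_one]
  have hdvd_pk : (n : ℤ_[p]) ∣ (p : ℤ_[p]) ^ k := hdvd_pa.trans (pow_dvd_pow _ (by omega))
  refine PCSAux.elimination k hk1 N ?_ ?_ m 0 (by omega) x hx
    (fun i j hj _ => absurd hj (Nat.not_lt_zero _))
    (fun j hj => absurd hj (Nat.not_lt_zero _))
  · intro i j hij t ht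
    obtain ⟨s, hs⟩ := hdvd_pk.trans ht
    rw [hs, ← PCSAux.elemSL_pow i j hij s n, hndef]
    exact Subgroup.pow_index_mem N _
  · intro c hcm v hv
    obtain ⟨vr, hvr⟩ := PCSAux.exists_pow_eq (p := p) n hn0 v hv
    rw [← hvr, ← PCSAux.diagSL_pow, hndef]
    exact Subgroup.pow_index_mem N _
end

section
/- Let Γ₁ be a countable dense subgroup of a compact group K₁ and L₁ ≤ K₁ a closed subgroup. Then the action of Γ₁ on K₁/L₁ is uniquely ergodic: the Haar measure (pushforward of Haar measure on K₁) is the unique Γ₁-invariant Borel probability measure on K₁/L₁. -/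
open MeasureTheory Set TopologicalSpace Filter
open scoped Topology NNReal ENNReal Pointwise

section intclm
variable {X : Type*} [TopologicalSpace X] [CompactSpace X] [MeasurableSpace X]
  [OpensMeasurableSpace X]
lemma UE.cmIntegrable (P : Measure X) [IsFiniteMeasure P] (f : C(X, ℝ)) :
    Integrable f P :=
  ⟨f.continuous.aestronglyMeasurable, HasFiniteIntegral.of_bounded (C := ‖f‖)
    (Eventually.of_forall fun x => f.norm_coe_le_norm x)⟩
noncomputable def UE.intCLM (P : Measure X) [IsFiniteMeasure P] : C(X, ℝ) →L[ℝ] ℝ :=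
  LinearMap.mkContinuous
    { toFun := fun f => ∫ x, f x ∂P
      map_add' := fun f g => integral_add (UE.cmIntegrable P f) (UE.cmIntegrable P g)
      map_smul' := fun c f => by
        simp only [ContinuousMap.coe_smul, Pi.smul_apply, smul_eq_mul, RingHom.id_apply]
        rw [integral_const_mul] }
    (P univ).toReal
    (fun f => by
      rw [mul_comm]
      exact (norm_integral_le_of_norm_le_const
        (Eventually.of_forall fun x => f.norm_coe_le_norm x)))
@[simp] lemma UE.intCLM_apply (P : Measure X) [IsFiniteMeasure P] (f : C(X, ℝ)) :
    UE.intCLM P f = ∫ x, f x ∂P := rfl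
end intclm

section rightinv
variable {K : Type*} [Group K] [TopologicalSpace K] [IsTopologicalGroup K] [CompactSpace K]
  [MeasurableSpace K] [BorelSpace K]
lemma UE.map_mul_right' (μ : Measure K) [μ.IsHaarMeasure] [IsProbabilityMeasure μ] (g : K) :
    μ.map (· * g) = μ := by
  have h1 : IsProbabilityMeasure (μ.map (· * g)) :=
    Measure.isProbabilityMeasure_map (measurable_mul_const g).aemeasurable
  exact Measure.isHaarMeasure_eq_of_isProbabilityMeasure (μ.map (· * g)) μ

lemma UE.exists_zero_set (μ : Measure K) [μ.IsHaarMeasure] [IsProbabilityMeasure μ]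
    (L : Subgroup K) (hL : IsClosed (L : Set K))
    [MeasurableSpace (K ⧸ L)] [BorelSpace (K ⧸ L)]
    {s : Set (K ⧸ L)} (hs : MeasurableSet s) {r : ℝ≥0∞}
    (hr : r < μ.map (QuotientGroup.mk : K → K ⧸ L) s) :
    ∃ ψ : C(K ⧸ L, ℝ), (⇑ψ) ⁻¹' {1} ⊆ s ∧
      r < μ.map (QuotientGroup.mk : K → K ⧸ L) ((⇑ψ) ⁻¹' {1}) := by
  haveI : μ.IsMulRightInvariant := ⟨fun g => UE.map_mul_right' μ g⟩
  have mk_cont : Continuous (QuotientGroup.mk : K → K ⧸ L) := QuotientGroup.continuous_mk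
  set t : Set K := QuotientGroup.mk ⁻¹' s with hts
  have ht : MeasurableSet t := mk_cont.measurable hs
  have hmap : ∀ {A : Set (K ⧸ L)}, MeasurableSet A →
      μ.map (QuotientGroup.mk : K → K ⧸ L) A = μ (QuotientGroup.mk ⁻¹' A) :=
    fun hA => Measure.map_apply mk_cont.measurable hA
  rw [hmap hs] at hr
  -- inner approximation by a compact set
  obtain ⟨C, hCt, hCcomp, hrC⟩ :=
    (inferInstance : μ.InnerRegular).innerRegular ht r hr
  -- saturate it
  set K₂ : Set K := C * (L : Set K) with hK₂
  have hK₂comp : IsCompact K₂ := hCcomp.mul hL.isCompact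
  have hK₂closed : IsClosed K₂ := IsClosed.mul_left_of_isCompact hL hCcomp
  have hK₂sat : ∀ x ∈ K₂, ∀ l ∈ L, x * l ∈ K₂ := by
    rintro x ⟨c, hc, l', hl', rfl⟩ l hl
    exact ⟨c, hc, l' * l, mul_mem hl' hl, (mul_assoc _ _ _).symm⟩
  have hCK₂ : C ⊆ K₂ := fun c hc => ⟨c, hc, 1, one_mem L, mul_one c⟩
  have hK₂t : K₂ ⊆ t := by
    rintro x ⟨c, hc, l, hl, rfl⟩
    show QuotientGroup.mk (c * l) ∈ s
    rw [QuotientGroup.mk_mul_of_mem c hl]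
    exact hCt hc
  -- everywhere positive core
  set E : Set K := μ.everywherePosSubset K₂ with hE
  have hEK₂ : E ⊆ K₂ := Measure.everywherePosSubset_subset μ K₂
  have hEcomp : IsCompact E := hK₂comp.everywherePosSubset
  have hEclosed : IsClosed E := hK₂closed.everywherePosSubset
  have hEmeas : μ E = μ K₂ :=
    measure_congr (Measure.everywherePosSubset_ae_eq hK₂closed.measurableSet)
  have hEpos : μ.IsEverywherePos E :=
    Measure.isEverywherePos_everywherePosSubset hK₂closed.measurableSet
  have hEGδ : IsGδ E := hEpos.IsGdelta_of_isMulLeftInvariant hEcomp hEclosed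
  -- the core is still saturated
  have hEsat : ∀ x ∈ E, ∀ l ∈ L, x * l ∈ E := by
    intro x hx l hl
    refine ⟨hK₂sat x hx.1 l hl, fun n hn => ?_⟩
    have hmaps : MapsTo (· * l) K₂ K₂ := fun y hy => hK₂sat y hy l hl
    have htend : Tendsto (· * l) (𝓝[K₂] x) (𝓝[K₂] (x * l)) :=
      ((continuous_mul_right l).continuousAt.continuousWithinAt).tendsto_nhdsWithin hmaps
    have hpre : (· * l) ⁻¹' n ∈ 𝓝[K₂] x := htend hn
    have h0 : 0 < μ ((· * l) ⁻¹' n) := hx.2 _ hpre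
    rwa [measure_preimage_mul_right μ l n] at h0
  -- a function vanishing exactly (to 1) on E
  obtain ⟨f, hfE, -, -, hficc⟩ :=
    exists_continuous_one_zero_of_isCompact_of_isGδ hEcomp hEGδ isClosed_empty
      (disjoint_empty _)
  -- Haar measure on L
  haveI hLcomp : CompactSpace L := isCompact_iff_compactSpace.mp hL.isCompact
  haveI hLborel : BorelSpace L := Subtype.borelSpace (L : Set K)
  set lam : Measure L := Measure.haar with hlam
  have hc₀pos : 0 < (lam univ).toReal := by
    refine ENNReal.toReal_pos ?_ (measure_ne_top _ _)
    exact (isOpen_univ.measure_pos lam (univ_nonempty)).ne'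
  set c₀ : ℝ := (lam univ).toReal with hc₀
  -- averaged function
  set Φ₂ : C(K × L, ℝ) :=
    ⟨fun p => f (p.1 * (p.2 : K)),
      f.continuous.comp (continuous_fst.mul (continuous_subtype_val.comp continuous_snd))⟩
    with hΦ₂
  set F₂ : C(K, C(L, ℝ)) := Φ₂.curry with hF₂
  set hfun : K → ℝ := fun g => (∫ l : L, f (g * (l : K)) ∂lam) / c₀ with hhfun
  have hfun_eq : ∀ g : K, hfun g = (UE.intCLM lam (F₂ g)) / c₀ := fun g => rfl
  have hfun_cont : Continuous hfun := by
    have : Continuous fun g => (UE.intCLM lam) (F₂ g) :=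
      (UE.intCLM lam).continuous.comp F₂.continuous
    exact this.div_const c₀
  -- right invariance of hfun under L
  have hfun_inv : ∀ (g : K) (l₀ : L), hfun (g * (l₀ : K)) = hfun g := by
    intro g l₀
    have e0 : ∀ l : L, f (g * (l₀ : K) * ((l : L) : K)) = f (g * ((l₀ * l : L) : K)) := by
      intro l
      rw [Subgroup.coe_mul, mul_assoc]
    have e1 : ∫ l : L, f (g * (l₀ : K) * (l : K)) ∂lam
        = ∫ l : L, f (g * ((l₀ * l : L) : K)) ∂lam := by
      simp_rw [e0]
    have hφc : Continuous fun l : L => f (g * (l : K)) :=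
      f.continuous.comp ((continuous_mul_left g).comp continuous_subtype_val)
    have e2 : ∫ l : L, f (g * ((l₀ * l : L) : K)) ∂lam = ∫ l : L, f (g * (l : K)) ∂lam := by
      conv_rhs => rw [← map_mul_left_eq_self lam l₀]
      rw [integral_map (measurable_const_mul l₀).aemeasurable hφc.aestronglyMeasurable]
    simp only [hhfun]
    rw [e1, e2]
  -- characterization `E = hfun ⁻¹' {1}`
  have hE1 : ∀ g ∈ E, hfun g = 1 := by
    intro g hg
    have hall : ∀ l : L, f (g * (l : K)) = 1 := by
      intro l
      have hmem : g * (l : K) ∈ E := hEsat g hg l l.2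
      rw [hfE] at hmem
      exact hmem
    have : (∫ l : L, f (g * (l : K)) ∂lam) = c₀ := by
      simp_rw [hall]
      simp [hc₀]
      rfl
    simp only [hhfun]
    rw [this]
    exact div_self hc₀pos.ne'
  have hE2 : ∀ g : K, hfun g = 1 → g ∈ E := by
    intro g hg
    have hint : ∫ l : L, f (g * (l : K)) ∂lam = c₀ := by
      have := hg
      simp only [hhfun] at this
      exact (div_eq_one_iff_eq hc₀pos.ne').mp this
    have hφcont : Continuous fun l : L => 1 - f (g * (l : K)) :=
      continuous_const.sub (f.continuous.comp ((continuous_mul_left g).comp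
        continuous_subtype_val))
    have hφint : Integrable (fun l : L => 1 - f (g * (l : K))) lam :=
      UE.cmIntegrable lam ⟨_, hφcont⟩
    have hφint2 : Integrable (fun l : L => f (g * (l : K))) lam :=
      UE.cmIntegrable lam ⟨_, f.continuous.comp ((continuous_mul_left g).comp
        continuous_subtype_val)⟩
    have hφnn : 0 ≤ fun l : L => 1 - f (g * (l : K)) := by
      intro l
      have := (hficc (g * (l : K))).2
      simp only [Pi.zero_apply]
      linarith
    have hφ0 : ∫ l : L, (1 - f (g * (l : K))) ∂lam = 0 := by
      rw [integral_sub (integrable_const 1) hφint2, hint]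
      simp [hc₀]
      exact sub_self _
    have hae : (fun l : L => 1 - f (g * (l : K))) =ᵐ[lam] 0 :=
      (integral_eq_zero_iff_of_nonneg hφnn hφint).mp hφ0
    have heq : (fun l : L => 1 - f (g * (l : K))) = 0 :=
      (Continuous.ae_eq_iff_eq lam hφcont continuous_const).mp hae
    have hfg : f g = 1 := by
      have h1 := congrFun heq (1 : L)
      simp only [OneMemClass.coe_one, mul_one, Pi.zero_apply] at h1
      linarith
    rw [hfE]
    exact hfg
  -- descend to the quotient
  set ψ : K ⧸ L → ℝ := fun x => Quotient.liftOn' x hfun (by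
    intro a b hab
    rw [QuotientGroup.leftRel_apply] at hab
    have hb : b = a * ((⟨a⁻¹ * b, hab⟩ : L) : K) := by
      simp [mul_assoc]
    rw [hb, hfun_inv]) with hψdef
  have hψmk : ∀ g : K, ψ (QuotientGroup.mk g) = hfun g := fun g => rfl
  have hψcont : Continuous ψ := by
    rw [(QuotientGroup.isQuotientMap_mk L).continuous_iff]
    exact hfun_cont
  have hψpre : (QuotientGroup.mk : K → K ⧸ L) ⁻¹' (ψ ⁻¹' {1}) = E := by
    ext g
    simp only [mem_preimage, mem_singleton_iff, hψmk]
    exact ⟨hE2 g, hE1 g⟩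
  refine ⟨⟨ψ, hψcont⟩, ?_, ?_⟩
  · intro x hx
    obtain ⟨g, rfl⟩ := QuotientGroup.mk_surjective x
    have hgE : g ∈ E := by
      rw [← hψpre]
      exact hx
    exact hK₂t (hEK₂ hgE)
  · have hZmeas : MeasurableSet (ψ ⁻¹' {1}) :=
      (isClosed_singleton.preimage hψcont).measurableSet
    have hcoe : (⇑(⟨ψ, hψcont⟩ : C(K ⧸ L, ℝ))) = ψ := rfl
    rw [hcoe, hmap hZmeas, hψpre]
    calc r < μ C := hrC
      _ ≤ μ K₂ := measure_mono hCK₂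
      _ = μ E := hEmeas.symm

end rightinv


section partA

variable {K : Type*} [Group K] [TopologicalSpace K] [IsTopologicalGroup K] [CompactSpace K]
  [MeasurableSpace K] [BorelSpace K]

lemma UE.integral_eq (μ : Measure K) [μ.IsHaarMeasure] [IsProbabilityMeasure μ]
    (L : Subgroup K) [MeasurableSpace (K ⧸ L)] [BorelSpace (K ⧸ L)]
    (Γ : Subgroup K) (hΓ : Dense (Γ : Set K))
    (ν : Measure (K ⧸ L)) [IsProbabilityMeasure ν]
    (hinv : ∀ γ : Γ, ν.map (fun x => (γ : K) • x) = ν)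
    (f : C(K ⧸ L, ℝ)) :
    ∫ x, f x ∂ν = ∫ x, f x ∂(μ.map (QuotientGroup.mk : K → K ⧸ L)) := by
  borelize C(K ⧸ L, ℝ)
  set m : Measure (K ⧸ L) := μ.map (QuotientGroup.mk : K → K ⧸ L) with hm
  haveI : IsProbabilityMeasure m :=
    Measure.isProbabilityMeasure_map QuotientGroup.continuous_mk.measurable.aemeasurable
  set Φ : C(K × (K ⧸ L), ℝ) := ⟨fun p => f (p.1 • p.2), f.continuous.comp continuous_smul⟩
    with hΦ
  set F : C(K, C(K ⧸ L, ℝ)) := Φ.curry with hF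
  have hFx : ∀ (g : K) (x : K ⧸ L), F g x = f (g • x) := fun g x => rfl
  have hFsm : StronglyMeasurable (⇑F) := by
    rw [stronglyMeasurable_iff_measurable_separable]
    exact ⟨F.continuous.measurable, (isCompact_range F.continuous).isSeparable⟩
  have hFnorm : ∀ g : K, ‖F g‖ ≤ ‖f‖ := by
    intro g
    refine (ContinuousMap.norm_le _ (norm_nonneg f)).mpr fun x => ?_
    exact f.norm_coe_le_norm (g • x)
  have hFint : Integrable (⇑F) μ :=
    ⟨hFsm.aestronglyMeasurable,
      HasFiniteIntegral.of_bounded (C := ‖f‖) (Eventually.of_forall hFnorm)⟩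
  set T : C(K ⧸ L, ℝ) →L[ℝ] ℝ := UE.intCLM ν with hT
  -- on the dense subgroup, translation leaves the integral unchanged
  have hconst : (fun g : K => T (F g)) = fun _ => ∫ x, f x ∂ν := by
    apply Continuous.ext_on hΓ (T.continuous.comp F.continuous) continuous_const
    intro g hg
    show T (F g) = ∫ x, f x ∂ν
    have e1 : T (F g) = ∫ x, f (g • x) ∂ν := rfl
    have e2 : ∫ y, f y ∂(ν.map (fun x => g • x)) = ∫ x, f (g • x) ∂ν :=
      integral_map (continuous_const_smul g).aemeasurable f.continuous.aestronglyMeasurable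
    have e3 : ν.map (fun x => g • x) = ν := hinv ⟨g, hg⟩
    rw [e1, ← e2, e3]
  -- the averaged translate is the constant function with value `∫ f dm`
  have eval : ∀ x : K ⧸ L, (∫ g, F g ∂μ) x = ∫ s, f s ∂m := by
    intro x
    obtain ⟨k, rfl⟩ := QuotientGroup.mk_surjective x
    have e1 : (∫ g, F g ∂μ) (QuotientGroup.mk k)
        = ∫ g, F g (QuotientGroup.mk k) ∂μ := by
      have := (ContinuousMap.evalCLM ℝ (QuotientGroup.mk k : K ⧸ L)).integral_comp_comm hFint
      exact this.symm
    have e2 : ∀ g : K, F g (QuotientGroup.mk k : K ⧸ L) = f (QuotientGroup.mk (g * k)) := by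
      intro g
      have hsm : (g • (QuotientGroup.mk k : K ⧸ L)) = QuotientGroup.mk (g * k) := by
        rw [MulAction.Quotient.smul_mk, smul_eq_mul]
      rw [hFx, hsm]
    have e3 : ∫ y, f (QuotientGroup.mk y : K ⧸ L) ∂(μ.map (· * k))
        = ∫ g, f (QuotientGroup.mk (g * k) : K ⧸ L) ∂μ :=
      integral_map (measurable_mul_const k).aemeasurable
        (f.continuous.comp QuotientGroup.continuous_mk).aestronglyMeasurable
    have e4 : ∫ y, f y ∂m = ∫ y, f (QuotientGroup.mk y : K ⧸ L) ∂μ :=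
      integral_map QuotientGroup.continuous_mk.measurable.aemeasurable
        f.continuous.aestronglyMeasurable
    rw [e1]
    simp_rw [e2]
    rw [← e3, UE.map_mul_right' μ k, ← e4]
  have hcc : ∫ g, F g ∂μ = ContinuousMap.const (K ⧸ L) (∫ s, f s ∂m) :=
    ContinuousMap.ext eval
  calc ∫ x, f x ∂ν = ∫ g, T (F g) ∂μ := by
        rw [hconst]; simp
    _ = T (∫ g, F g ∂μ) := T.integral_comp_comm hFint
    _ = ∫ x, f x ∂m := by
        rw [hcc]
        show ∫ _x, (ContinuousMap.const (K ⧸ L) (∫ s, f s ∂m)) _x ∂ν = _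
        simp

end partA

lemma UE.measure_preimage_one_eq {X : Type*} [TopologicalSpace X] [CompactSpace X]
    [MeasurableSpace X] [OpensMeasurableSpace X]
    (ν m : Measure X) [IsFiniteMeasure ν] [IsFiniteMeasure m]
    (h : ∀ f : C(X, ℝ), ∫ x, f x ∂ν = ∫ x, f x ∂m)
    {f : X → ℝ} (hf : Continuous f) :
    ν (f ⁻¹' {1}) = m (f ⁻¹' {1}) := by
  obtain ⟨u, -, u_mem, u_lim⟩ : ∃ u, StrictAnti u ∧ (∀ (n : ℕ), u n ∈ Ioo (0:ℝ) 1)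
      ∧ Tendsto u atTop (𝓝 0) := exists_seq_strictAnti_tendsto' one_pos
  let v : ℕ → ℝ → ℝ := fun n x => thickenedIndicator (u_mem n).1 ({1} : Set ℝ) x
  have vf_cont : ∀ n, Continuous fun x => v n (f x) := by
    intro n
    apply Continuous.comp (continuous_induced_dom.comp ?_) hf
    exact BoundedContinuousFunction.continuous (thickenedIndicator (u_mem n).left {1})
  have I : ∀ (P : Measure X), IsFiniteMeasure P →
      Tendsto (fun n => ∫ x, v n (f x) ∂P) atTop
        (𝓝 (∫ x, Set.indicator ({1} : Set ℝ) (fun _ => (1:ℝ)) (f x) ∂P)) := by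
    intro P hP
    apply tendsto_integral_of_dominated_convergence (bound := fun _ => (1:ℝ))
    · exact fun n => (vf_cont n).aestronglyMeasurable
    · exact integrable_const _
    · refine fun n => Eventually.of_forall fun x => ?_
      simp only [v, Real.norm_eq_abs, NNReal.abs_eq]
      norm_cast
      exact thickenedIndicator_le_one _ _ _
    · filter_upwards with x
      have T := tendsto_pi_nhds.1 (thickenedIndicator_tendsto_indicator_closure
        (fun n => (u_mem n).1) u_lim ({1} : Set ℝ)) (f x)
      simp only [thickenedIndicator_apply, closure_singleton] at T
      convert NNReal.tendsto_coe.2 T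
      simp
      by_cases hx : f x = 1 <;> simp [Set.indicator, hx]
  have M : ∀ n, ∫ x, v n (f x) ∂ν = ∫ x, v n (f x) ∂m := fun n =>
    h ⟨fun x => v n (f x), vf_cont n⟩
  have I1 := I ν inferInstance
  simp_rw [M] at I1
  have J1 : ∫ x, Set.indicator ({1}:Set ℝ) (fun _ => (1:ℝ)) (f x) ∂ν
      = ∫ x, Set.indicator ({1}:Set ℝ) (fun _ => (1:ℝ)) (f x) ∂m :=
    tendsto_nhds_unique I1 (I m inferInstance)
  have key : ∀ (P : Measure X), IsFiniteMeasure P →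
      ∫ x, Set.indicator ({1}:Set ℝ) (fun _ => (1:ℝ)) (f x) ∂P = (P (f ⁻¹' {1})).toReal := by
    intro P hP
    have e : (fun x => Set.indicator ({1}:Set ℝ) (fun _ => (1:ℝ)) (f x))
        = (f ⁻¹' {1}).indicator (fun _ => (1:ℝ)) := by
      ext x
      exact (Set.indicator_comp_right f (s := ({1} : Set ℝ))
        (g := fun _ => (1:ℝ)) (x := x)).symm
    rw [e, integral_indicator_const _ ((isClosed_singleton.preimage hf).measurableSet)]
    simp
    rfl
  rw [key ν inferInstance, key m inferInstance] at J1
  exact (ENNReal.toReal_eq_toReal_iff' (measure_ne_top _ _) (measure_ne_top _ _)).mp J1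


open MeasureTheory

/-- Unique ergodicity: if `Γ₁` is a countable dense subgroup of a compact group `K₁` and
`L₁ ≤ K₁` is closed, then the pushforward of Haar measure is the unique `Γ₁`-invariant
Borel probability measure on `K₁/L₁`. -/
theorem translation_action_uniquely_ergodic
    {K₁ : Type*} [Group K₁] [TopologicalSpace K₁] [IsTopologicalGroup K₁] [CompactSpace K₁]
    [MeasurableSpace K₁] [BorelSpace K₁]
    (μ : Measure K₁) [μ.IsHaarMeasure] [IsProbabilityMeasure μ]
    (L₁ : Subgroup K₁) (hL₁ : IsClosed (L₁ : Set K₁))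
    [MeasurableSpace (K₁ ⧸ L₁)] [BorelSpace (K₁ ⧸ L₁)]
    (Γ₁ : Subgroup K₁) [Countable Γ₁] (hΓ₁ : Dense (Γ₁ : Set K₁))
    (ν : Measure (K₁ ⧸ L₁)) [IsProbabilityMeasure ν]
    (hinv : ∀ γ : Γ₁, ν.map (fun x => (γ : K₁) • x) = ν) :
    ν = μ.map (QuotientGroup.mk : K₁ → K₁ ⧸ L₁) := by
  have hint : ∀ f : C(K₁ ⧸ L₁, ℝ),
      ∫ x, f x ∂ν = ∫ x, f x ∂(μ.map (QuotientGroup.mk : K₁ → K₁ ⧸ L₁)) :=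
    UE.integral_eq μ L₁ Γ₁ hΓ₁ ν hinv
  haveI : IsProbabilityMeasure (μ.map (QuotientGroup.mk : K₁ → K₁ ⧸ L₁)) :=
    Measure.isProbabilityMeasure_map QuotientGroup.continuous_mk.measurable.aemeasurable
  have hle : ∀ s : Set (K₁ ⧸ L₁), MeasurableSet s →
      μ.map (QuotientGroup.mk : K₁ → K₁ ⧸ L₁) s ≤ ν s := by
    intro s hs
    refine le_of_forall_lt fun r hr => ?_
    obtain ⟨ψ, hZs, hrZ⟩ := UE.exists_zero_set μ L₁ hL₁ hs hr
    calc r < μ.map (QuotientGroup.mk : K₁ → K₁ ⧸ L₁) ((⇑ψ) ⁻¹' {1}) := hrZ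
      _ = ν ((⇑ψ) ⁻¹' {1}) :=
        (UE.measure_preimage_one_eq ν (μ.map (QuotientGroup.mk : K₁ → K₁ ⧸ L₁)) hint
          ψ.continuous).symm
      _ ≤ ν s := measure_mono hZs
  ext s hs
  refine le_antisymm ?_ (hle s hs)
  calc ν s = 1 - (1 - ν s) := (ENNReal.sub_sub_cancel ENNReal.one_ne_top prob_le_one).symm
    _ = 1 - ν sᶜ := by rw [prob_compl_eq_one_sub hs]
    _ ≤ 1 - μ.map (QuotientGroup.mk : K₁ → K₁ ⧸ L₁) sᶜ := tsub_le_tsub_left (hle sᶜ hs.compl) 1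
    _ = 1 - (1 - μ.map (QuotientGroup.mk : K₁ → K₁ ⧸ L₁) s) := by
        rw [prob_compl_eq_one_sub hs]
    _ = μ.map (QuotientGroup.mk : K₁ → K₁ ⧸ L₁) s :=
        ENNReal.sub_sub_cancel ENNReal.one_ne_top prob_le_one
end

section
/- For i = 0, 1 let Γ_i be a countable dense subgroup of a compact group K_i, with closed subgroups L_i ≤ K_i, and assume the action of K₁ on K₁/L₁ has trivial kernel. Suppose φ : Γ₀ → Γ₁ is a surjective homomorphism and (φ, f) is a homomorphism of permutation groups from Γ₀ ↷ K₀/L₀ to Γ₁ ↷ K₁/L₁ with f Borel. Then φ extends to a continuous homomorphism Φ : K₀ → K₁. -/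
open MeasureTheory

open Set in
/-- The quotient of a topological group by a closed subgroup is a Hausdorff space. -/
private lemma t2_quotient_of_isClosed {G : Type*} [Group G] [TopologicalSpace G]
    [IsTopologicalGroup G] (H : Subgroup G) (hH : IsClosed (H : Set G)) : T2Space (G ⧸ H) := by
  rw [t2_iff_isClosed_diagonal]
  have hq : IsOpenQuotientMap
      (Prod.map (QuotientGroup.mk : G → G ⧸ H) (QuotientGroup.mk : G → G ⧸ H)) :=
    QuotientGroup.isOpenQuotientMap_mk.prodMap QuotientGroup.isOpenQuotientMap_mk
  rw [← hq.isQuotientMap.isClosed_preimage]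
  have : Prod.map (QuotientGroup.mk : G → G ⧸ H) QuotientGroup.mk ⁻¹' diagonal (G ⧸ H)
      = {p : G × G | p.1⁻¹ * p.2 ∈ H} := by
    ext p
    simp only [mem_preimage, Prod.map_apply, mem_diagonal_iff, mem_setOf_eq]
    exact ⟨fun h => (QuotientGroup.eq.mp h), fun h => QuotientGroup.eq.mpr h⟩
  rw [this]
  exact hH.preimage (continuous_fst.inv.mul continuous_snd)

/-- If a bounded measurable function on a compact space with a finite weakly regular measure
is orthogonal to all continuous functions, then it vanishes almost everywhere. -/
private lemma ae_eq_zero_of_forall_integral_continuous_eq_zero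
    {X : Type*} [TopologicalSpace X] [CompactSpace X] [T2Space X]
    [MeasurableSpace X] [BorelSpace X]
    (μ : Measure X) [IsFiniteMeasure μ] [μ.WeaklyRegular]
    (h : X → ℝ) (hmeas : Measurable h) (C : ℝ) (hbd : ∀ x, ‖h x‖ ≤ C)
    (horth : ∀ ψ : C(X, ℝ), ∫ x, ψ x * h x ∂μ = 0) :
    h =ᵐ[μ] 0 := by
  have hmem : MemLp h 2 μ :=
    MemLp.of_bound hmeas.aestronglyMeasurable C (Filter.Eventually.of_forall hbd)
  set H : Lp ℝ 2 μ := hmem.toLp h with hH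
  have hinner : ∀ ψ : C(X, ℝ), (inner ℝ (ContinuousMap.toLp (E := ℝ) 2 μ ℝ ψ) H : ℝ) = 0 := by
    intro ψ
    rw [MeasureTheory.L2.inner_def, ← horth ψ]
    apply integral_congr_ae
    filter_upwards [ContinuousMap.coeFn_toLp (E := ℝ) (𝕜 := ℝ) (p := 2) μ ψ,
      hmem.coeFn_toLp] with x h1 h2
    rw [h1, h2]
    simp [RCLike.inner_apply, mul_comm]
  have hzero : ∀ v : Lp ℝ 2 μ, (inner ℝ v H : ℝ) = 0 := by
    have hdense : DenseRange (ContinuousMap.toLp (E := ℝ) 2 μ ℝ : C(X, ℝ) →L[ℝ] Lp ℝ 2 μ) :=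
      ContinuousMap.toLp_denseRange (𝕜 := ℝ) (E := ℝ) (μ := μ) (by norm_num)
    have heq : (fun v : Lp ℝ 2 μ => (inner ℝ v H : ℝ)) = fun _ => (0 : ℝ) := by
      apply Continuous.ext_on (hdense : Dense (Set.range _))
      · exact continuous_id.inner continuous_const
      · exact continuous_const
      · rintro _ ⟨ψ, rfl⟩
        exact hinner ψ
    exact fun v => congrFun heq v
  have hH0 : H = 0 := by
    have := hzero H
    rwa [inner_self_eq_zero] at this
  have h0 : h =ᵐ[μ] H := hmem.coeFn_toLp.symm
  rw [hH0] at h0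
  exact h0.trans (Lp.coeFn_zero ℝ 2 μ)

/-- Furman's lemma: for `i = 0, 1` let `Γᵢ` be a countable dense subgroup of the compact
group `Kᵢ`, `Lᵢ ≤ Kᵢ` closed, and suppose the action of `K₁` on `K₁/L₁` has trivial kernel.
If `φ : Γ₀ → Γ₁` is a surjective homomorphism and `(φ, f)` is a Borel homomorphism of
permutation groups from `Γ₀ ↷ K₀/L₀` to `Γ₁ ↷ K₁/L₁`, then `φ` extends to a continuous
homomorphism `Φ : K₀ → K₁`. -/
theorem surjective_permutation_homomorphism_extends
    {K₀ K₁ : Type*} [Group K₀] [TopologicalSpace K₀] [IsTopologicalGroup K₀] [CompactSpace K₀]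
    [MeasurableSpace K₀] [BorelSpace K₀]
    [Group K₁] [TopologicalSpace K₁] [IsTopologicalGroup K₁] [CompactSpace K₁]
    (L₀ : Subgroup K₀) (hL₀ : IsClosed (L₀ : Set K₀))
    (L₁ : Subgroup K₁) (hL₁ : IsClosed (L₁ : Set K₁))
    [MeasurableSpace (K₀ ⧸ L₀)] [BorelSpace (K₀ ⧸ L₀)]
    [MeasurableSpace (K₁ ⧸ L₁)] [BorelSpace (K₁ ⧸ L₁)]
    (μ : Measure K₀) [μ.IsHaarMeasure] [IsProbabilityMeasure μ]
    (Γ₀ : Subgroup K₀) [Countable Γ₀] (hΓ₀ : Dense (Γ₀ : Set K₀))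
    (Γ₁ : Subgroup K₁) [Countable Γ₁] (hΓ₁ : Dense (Γ₁ : Set K₁))
    (hker : ∀ k : K₁, (∀ k' : K₁, k'⁻¹ * k * k' ∈ L₁) → k = 1)
    (φ : Γ₀ →* Γ₁) (hφ : Function.Surjective φ)
    (f : K₀ ⧸ L₀ → K₁ ⧸ L₁) (hf : Measurable f)
    (hhom : ∀ γ : Γ₀, ∀ᵐ x ∂(μ.map (QuotientGroup.mk : K₀ → K₀ ⧸ L₀)),
      f ((γ : K₀) • x) = ((φ γ : K₁)) • f x) :
    ∃ Φ : K₀ →* K₁, Continuous Φ ∧ ∀ γ : Γ₀, Φ γ = (φ γ : K₁) := by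
  classical
  set μ' : Measure (K₀ ⧸ L₀) := μ.map (QuotientGroup.mk : K₀ → K₀ ⧸ L₀) with hμ'def
  have hmkmeas : Measurable (QuotientGroup.mk : K₀ → K₀ ⧸ L₀) :=
    QuotientGroup.continuous_mk.measurable
  haveI : IsProbabilityMeasure μ' := Measure.isProbabilityMeasure_map hmkmeas.aemeasurable
  haveI hT2X : T2Space (K₀ ⧸ L₀) := t2_quotient_of_isClosed L₀ hL₀
  haveI hT2Y : T2Space (K₁ ⧸ L₁) := t2_quotient_of_isClosed L₁ hL₁
  haveI : μ'.InnerRegular :=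
    Measure.InnerRegular.map_of_continuous QuotientGroup.continuous_mk
  haveI : μ'.WeaklyRegular := inferInstance
  -- translations of `K₀ ⧸ L₀` preserve `μ'`
  have hmp : ∀ a : K₀, MeasurePreserving (fun x : K₀ ⧸ L₀ => a • x) μ' μ' := by
    intro a
    refine ⟨(continuous_const_smul a).measurable, ?_⟩
    rw [hμ'def, Measure.map_map (continuous_const_smul a).measurable hmkmeas]
    have hcomp : (fun x : K₀ ⧸ L₀ => a • x) ∘ (QuotientGroup.mk : K₀ → K₀ ⧸ L₀)
        = (QuotientGroup.mk : K₀ → K₀ ⧸ L₀) ∘ (fun g => a * g) := by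
      funext g
      exact (MulAction.Quotient.smul_mk L₀ a g).symm
    rw [hcomp, ← Measure.map_map hmkmeas (measurable_const_mul a),
      (measurePreserving_mul_left μ a).map_eq]
  -- integrability of the test integrands
  have hintegrable : ∀ (u : C(K₀ ⧸ L₀, ℝ)) (v : C(K₁ ⧸ L₁, ℝ)),
      Integrable (fun x => u x * v (f x)) μ' := by
    intro u v
    refine ⟨(u.continuous.measurable.mul
      (v.continuous.measurable.comp hf)).aestronglyMeasurable, ?_⟩
    refine HasFiniteIntegral.of_bounded (C := ‖u‖ * ‖v‖) (Filter.Eventually.of_forall ?_)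
    intro x
    calc ‖u x * v (f x)‖ = ‖u x‖ * ‖v (f x)‖ := norm_mul _ _
    _ ≤ ‖u‖ * ‖v‖ := mul_le_mul (u.norm_coe_le_norm x) (v.norm_coe_le_norm (f x))
        (norm_nonneg _) (norm_nonneg _)
  -- the bilinear functional
  let T : C(K₀ ⧸ L₀, ℝ) →L[ℝ] C(K₁ ⧸ L₁, ℝ) →L[ℝ] ℝ :=
    LinearMap.mkContinuous₂
      (LinearMap.mk₂ ℝ (fun u v => ∫ x, u x * v (f x) ∂μ')
        (fun u u' v => by
          simp only [ContinuousMap.add_apply, add_mul]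
          exact integral_add (hintegrable u v) (hintegrable u' v))
        (fun c u v => by
          simp only [ContinuousMap.smul_apply, smul_eq_mul, mul_assoc]
          exact integral_const_mul c _)
        (fun u v v' => by
          simp only [ContinuousMap.add_apply, mul_add]
          exact integral_add (hintegrable u v) (hintegrable u v'))
        (fun c u v => by
          simp only [ContinuousMap.smul_apply, smul_eq_mul]
          rw [← integral_const_mul]
          congr 1
          funext x
          ring))
      1
      (fun u v => by
        simp only [LinearMap.mk₂_apply, one_mul]
        calc ‖∫ x, u x * v (f x) ∂μ'‖ ≤ (‖u‖ * ‖v‖) * (μ' Set.univ).toReal := by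
              refine norm_integral_le_of_norm_le_const (Filter.Eventually.of_forall ?_)
              intro x
              calc ‖u x * v (f x)‖ = ‖u x‖ * ‖v (f x)‖ := norm_mul _ _
              _ ≤ ‖u‖ * ‖v‖ := mul_le_mul (u.norm_coe_le_norm x) (v.norm_coe_le_norm (f x))
                  (norm_nonneg _) (norm_nonneg _)
        _ = ‖u‖ * ‖v‖ := by simp)
  have hTapp : ∀ (u : C(K₀ ⧸ L₀, ℝ)) (v : C(K₁ ⧸ L₁, ℝ)),
      T u v = ∫ x, u x * v (f x) ∂μ' := fun u v => rfl
  -- the translated test functions, continuously parametrized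
  let Fψ : C(K₀ ⧸ L₀, ℝ) → C(K₀, C(K₀ ⧸ L₀, ℝ)) := fun ψ =>
    ContinuousMap.curry ⟨fun p : K₀ × (K₀ ⧸ L₀) => ψ (p.1⁻¹ • p.2),
      ψ.continuous.comp (continuous_fst.inv.smul continuous_snd)⟩
  let Fχ : C(K₁ ⧸ L₁, ℝ) → C(K₁, C(K₁ ⧸ L₁, ℝ)) := fun χ =>
    ContinuousMap.curry ⟨fun p : K₁ × (K₁ ⧸ L₁) => χ (p.1⁻¹ • p.2),
      χ.continuous.comp (continuous_fst.inv.smul continuous_snd)⟩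
  have hFψ : ∀ (ψ : C(K₀ ⧸ L₀, ℝ)) (a : K₀) (x : K₀ ⧸ L₀), Fψ ψ a x = ψ (a⁻¹ • x) :=
    fun _ _ _ => rfl
  have hFχ : ∀ (χ : C(K₁ ⧸ L₁, ℝ)) (b : K₁) (y : K₁ ⧸ L₁), Fχ χ b y = χ (b⁻¹ • y) :=
    fun _ _ _ => rfl
  -- the closure of the graph of φ
  let ρ : Γ₀ →* K₀ × K₁ := (Γ₀.subtype).prod (Γ₁.subtype.comp φ)
  let G : Subgroup (K₀ × K₁) := ρ.range.topologicalClosure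
  have hGclosed : IsClosed (G : Set (K₀ × K₁)) := Subgroup.isClosed_topologicalClosure _
  have hmemG : ∀ γ : Γ₀, ((γ : K₀), (φ γ : K₁)) ∈ G := fun γ =>
    Subgroup.le_topologicalClosure _ ⟨γ, rfl⟩
  -- the invariance identity holds on all of G
  have hGinv : ∀ p : K₀ × K₁, p ∈ G → ∀ (ψ : C(K₀ ⧸ L₀, ℝ)) (χ : C(K₁ ⧸ L₁, ℝ)),
      T (Fψ ψ p.1) (Fχ χ p.2) = T ψ χ := by
    intro p hp ψ χ
    have hcont : Continuous (fun q : K₀ × K₁ => T (Fψ ψ q.1) (Fχ χ q.2)) := by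
      exact T.continuous₂.comp (((Fψ ψ).continuous.comp continuous_fst).prodMk
        ((Fχ χ).continuous.comp continuous_snd))
    have hclosed : IsClosed {q : K₀ × K₁ | T (Fψ ψ q.1) (Fχ χ q.2) = T ψ χ} :=
      isClosed_eq hcont continuous_const
    have hsub : (ρ.range : Set (K₀ × K₁)) ⊆ {q : K₀ × K₁ | T (Fψ ψ q.1) (Fχ χ q.2) = T ψ χ} := by
      rintro - ⟨γ, rfl⟩
      show T (Fψ ψ (γ : K₀)) (Fχ χ (φ γ : K₁)) = T ψ χ
      rw [hTapp, hTapp]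
      have hsub1 : ∫ x, Fψ ψ (γ : K₀) x * Fχ χ (φ γ : K₁) (f x) ∂μ'
          = ∫ x, Fψ ψ (γ : K₀) ((γ : K₀) • x) * Fχ χ (φ γ : K₁) (f ((γ : K₀) • x)) ∂μ' :=
        ((hmp (γ : K₀)).integral_comp
          (Homeomorph.measurableEmbedding (Homeomorph.smul (γ : K₀))) _).symm
      rw [hsub1]
      apply integral_congr_ae
      filter_upwards [hhom γ] with x hx
      simp only [hFψ, hFχ, hx, inv_smul_smul]
    have hpmem : p ∈ closure (ρ.range : Set (K₀ × K₁)) := by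
      have : (G : Set (K₀ × K₁)) = closure (ρ.range : Set (K₀ × K₁)) :=
        Subgroup.topologicalClosure_coe
      rw [← this]
      exact hp
    exact closure_minimal hsub hclosed hpmem
  -- the key almost-everywhere identity for elements of the "kernel" of the first projection
  have hE : ∀ m : K₁, ((1 : K₀), m) ∈ G → ∀ χ : C(K₁ ⧸ L₁, ℝ),
      ∀ᵐ x ∂μ', χ (m⁻¹ • f x) = χ (f x) := by
    intro m hm χ
    set χm : C(K₁ ⧸ L₁, ℝ) := χ.comp ⟨fun y => m⁻¹ • y, continuous_const_smul _⟩ with hχm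
    have hχmapp : ∀ y, χm y = χ (m⁻¹ • y) := fun y => rfl
    have hIeq : ∀ ψ : C(K₀ ⧸ L₀, ℝ),
        ∫ x, ψ x * χ (m⁻¹ • f x) ∂μ' = ∫ x, ψ x * χ (f x) ∂μ' := by
      intro ψ
      have := hGinv ((1 : K₀), m) hm ψ χ
      rw [hTapp, hTapp] at this
      have h1 : ∫ x, Fψ ψ (1 : K₀) x * Fχ χ m (f x) ∂μ' = ∫ x, ψ x * χ (m⁻¹ • f x) ∂μ' := by
        apply integral_congr_ae
        apply Filter.Eventually.of_forall
        intro x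
        simp only [hFψ, hFχ, inv_one, one_smul]
      rw [h1] at this
      exact this
    have horth : ∀ ψ : C(K₀ ⧸ L₀, ℝ),
        ∫ x, ψ x * (χ (m⁻¹ • f x) - χ (f x)) ∂μ' = 0 := by
      intro ψ
      have h2 : ∀ x, ψ x * (χ (m⁻¹ • f x) - χ (f x))
          = ψ x * χm (f x) - ψ x * χ (f x) := by
        intro x
        rw [hχmapp]
        ring
      rw [integral_congr_ae (Filter.Eventually.of_forall h2),
        integral_sub (hintegrable ψ χm) (hintegrable ψ χ)]
      have h3 : ∫ x, ψ x * χm (f x) ∂μ' = ∫ x, ψ x * χ (m⁻¹ • f x) ∂μ' := rfl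
      rw [h3, hIeq ψ, sub_self]
    have hmeas_h : Measurable (fun x => χ (m⁻¹ • f x) - χ (f x)) := by
      have h4 : Measurable fun y : K₁ ⧸ L₁ => m⁻¹ • y := (continuous_const_smul _).measurable
      exact ((χ.continuous.measurable.comp (h4.comp hf)).sub
        (χ.continuous.measurable.comp hf))
    have hbd : ∀ x, ‖χ (m⁻¹ • f x) - χ (f x)‖ ≤ ‖χ‖ + ‖χ‖ := by
      intro x
      calc ‖χ (m⁻¹ • f x) - χ (f x)‖ ≤ ‖χ (m⁻¹ • f x)‖ + ‖χ (f x)‖ := norm_sub_le _ _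
      _ ≤ ‖χ‖ + ‖χ‖ := add_le_add (χ.norm_coe_le_norm _) (χ.norm_coe_le_norm _)
    have hae0 := ae_eq_zero_of_forall_integral_continuous_eq_zero μ'
      (fun x => χ (m⁻¹ • f x) - χ (f x)) hmeas_h (‖χ‖ + ‖χ‖) hbd horth
    filter_upwards [hae0] with x hx
    have : χ (m⁻¹ • f x) - χ (f x) = 0 := hx
    linarith
  -- triviality of the kernel of the first projection
  have hN : ∀ n : K₁, ((1 : K₀), n) ∈ G → n = 1 := by
    intro n hn
    -- a common fixed point for all Γ₁-conjugates of n
    have hfix : ∃ y : K₁ ⧸ L₁, ∀ γ₁ : Γ₁, n • ((γ₁ : K₁) • y) = (γ₁ : K₁) • y := by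
      by_contra hcon
      push_neg at hcon
      have key : ∀ y : K₁ ⧸ L₁, ∃ m : K₁, ((1 : K₀), m) ∈ G ∧
          ∃ χ : C(K₁ ⧸ L₁, ℝ), χ (m⁻¹ • y) = 0 ∧ χ y = 1 := by
        intro y
        obtain ⟨γ₁, hγ₁⟩ := hcon y
        obtain ⟨γ₀, hγ₀⟩ := hφ γ₁
        refine ⟨(γ₁ : K₁)⁻¹ * n * (γ₁ : K₁), ?_, ?_⟩
        · have hg : (((γ₀ : K₀), (γ₁ : K₁)) : K₀ × K₁) ∈ G := by
            have := hmemG γ₀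
            rwa [hγ₀] at this
          have hmul := G.mul_mem (G.mul_mem (G.inv_mem hg) hn) hg
          have heq : (((γ₀ : K₀), (γ₁ : K₁)) : K₀ × K₁)⁻¹ * ((1 : K₀), n)
              * (((γ₀ : K₀), (γ₁ : K₁)) : K₀ × K₁)
              = (((1 : K₀), (γ₁ : K₁)⁻¹ * n * (γ₁ : K₁)) : K₀ × K₁) := by
            ext
            · simp
            · simp [mul_assoc]
          rwa [heq] at hmul
        · -- Urysohn separation
          set m : K₁ := (γ₁ : K₁)⁻¹ * n * (γ₁ : K₁) with hm
          have hmy : m⁻¹ • y ≠ y := by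
            intro hcontra
            apply hγ₁
            have : m • y = y := by
              conv_lhs => rw [← hcontra]
              rw [smul_inv_smul]
            have h5 : ((γ₁ : K₁)⁻¹ * n * (γ₁ : K₁)) • y = y := this
            have h6 : n • ((γ₁ : K₁) • y) = (γ₁ : K₁) • y := by
              have := congrArg (fun z => (γ₁ : K₁) • z) h5
              simpa [mul_smul] using this
            exact h6
          obtain ⟨χ, hχ0, hχ1, -⟩ := exists_continuous_zero_one_of_isClosed
            (isClosed_singleton (x := m⁻¹ • y)) (isClosed_singleton (x := y))
            (Set.disjoint_singleton.mpr hmy)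
          exact ⟨χ, hχ0 rfl, hχ1 rfl⟩
      choose m hmG χs hχ0 hχ1 using key
      set W : K₁ ⧸ L₁ → Set (K₁ ⧸ L₁) := fun y =>
        {z | 2/3 < χs y z} ∩ {z | χs y ((m y)⁻¹ • z) < 1/3} with hW
      have hWopen : ∀ y, IsOpen (W y) := by
        intro y
        exact (isOpen_lt continuous_const (χs y).continuous).inter
          (isOpen_lt ((χs y).continuous.comp (continuous_const_smul _)) continuous_const)
      have hWmem : ∀ y, y ∈ W y := by
        intro y
        constructor
        · show (2:ℝ)/3 < χs y y
          rw [hχ1 y]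
          norm_num
        · show χs y ((m y)⁻¹ • y) < 1/3
          rw [hχ0 y]
          norm_num
      obtain ⟨t, ht⟩ := IsCompact.elim_finite_subcover isCompact_univ W hWopen
        (fun y _ => Set.mem_iUnion.mpr ⟨y, hWmem y⟩)
      have hae : ∀ᵐ x ∂μ', ∀ y ∈ t, χs y ((m y)⁻¹ • f x) = χs y (f x) :=
        (ae_ball_iff t.countable_toSet).mpr (fun y _ => hE (m y) (hmG y) (χs y))
      haveI : Filter.NeBot (ae μ') := ae_neBot.mpr (IsProbabilityMeasure.ne_zero μ')
      obtain ⟨x₀, hx₀⟩ := hae.exists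
      obtain ⟨y, hyt, hyW⟩ := Set.mem_iUnion₂.mp (ht (Set.mem_univ (f x₀)))
      have h7 : (2:ℝ)/3 < χs y (f x₀) := hyW.1
      have h8 : χs y ((m y)⁻¹ • f x₀) < 1/3 := hyW.2
      rw [hx₀ y hyt] at h8
      linarith
    obtain ⟨y, hy⟩ := hfix
    -- by density, n fixes every translate of y
    have hall : ∀ k : K₁, n • (k • y) = k • y := by
      have hclosed : IsClosed {k : K₁ | n • (k • y) = k • y} :=
        isClosed_eq ((continuous_id.smul continuous_const).const_smul n)
          (continuous_id.smul continuous_const)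
      have hsub : (Γ₁ : Set K₁) ⊆ {k : K₁ | n • (k • y) = k • y} := fun k hk => hy ⟨k, hk⟩
      intro k
      have : k ∈ closure (Γ₁ : Set K₁) := hΓ₁ k
      exact (hclosed.closure_subset_iff.mpr hsub) this
    -- hence all conjugates of n⁻¹ lie in L₁
    obtain ⟨c, hc⟩ := QuotientGroup.mk_surjective y
    have hconj : ∀ k' : K₁, k'⁻¹ * n⁻¹ * k' ∈ L₁ := by
      intro k'
      have h9 := hall (k' * c⁻¹)
      rw [← hc] at h9
      rw [MulAction.Quotient.smul_mk, smul_eq_mul] at h9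
      have h10 : (k' * c⁻¹ * c) = k' := by group
      rw [h10] at h9
      have h11 : n • (QuotientGroup.mk k' : K₁ ⧸ L₁)
          = (QuotientGroup.mk (n * k') : K₁ ⧸ L₁) := by
        rw [MulAction.Quotient.smul_mk, smul_eq_mul]
      rw [h11] at h9
      have h12 := QuotientGroup.eq.mp h9
      have h13 : (n * k')⁻¹ * k' = k'⁻¹ * n⁻¹ * k' := by group
      rwa [h13] at h12
    have := hker n⁻¹ hconj
    rwa [inv_eq_one] at this
  -- uniqueness of the second coordinate
  have huniq : ∀ (a : K₀) (b b' : K₁), (a, b) ∈ G → (a, b') ∈ G → b = b' := by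
    intro a b b' h1 h2
    have hmul := G.mul_mem (G.inv_mem h1) h2
    have heq : ((a, b) : K₀ × K₁)⁻¹ * (a, b') = (((1 : K₀), b⁻¹ * b') : K₀ × K₁) := by
      ext
      · simp
      · simp
    rw [heq] at hmul
    have := hN _ hmul
    rwa [inv_mul_eq_one] at this
  -- surjectivity of the first projection
  have hsurj : ∀ k : K₀, ∃ b : K₁, (k, b) ∈ G := by
    have hclosedim : IsClosed (Prod.fst '' (G : Set (K₀ × K₁))) :=
      isClosedMap_fst_of_compactSpace _ hGclosed
    have hdense : Dense (Prod.fst '' (G : Set (K₀ × K₁))) := by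
      apply hΓ₀.mono
      intro k hk
      exact ⟨(((⟨k, hk⟩ : Γ₀) : K₀), ((φ ⟨k, hk⟩ : Γ₁) : K₁)), hmemG ⟨k, hk⟩, rfl⟩
    intro k
    have : k ∈ Prod.fst '' (G : Set (K₀ × K₁)) := by
      rw [← hclosedim.closure_eq]
      exact hdense.closure_eq ▸ Set.mem_univ k
    obtain ⟨⟨a, b⟩, hab, hfst⟩ := this
    have ha : a = k := hfst
    subst ha
    exact ⟨b, hab⟩
  choose Φ₀ hΦ₀ using hsurj
  have hΦmul : ∀ a b : K₀, Φ₀ (a * b) = Φ₀ a * Φ₀ b := by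
    intro a b
    exact huniq (a * b) _ _ (hΦ₀ (a * b)) (G.mul_mem (hΦ₀ a) (hΦ₀ b))
  refine ⟨MonoidHom.mk' Φ₀ hΦmul, ?_, ?_⟩
  · rw [continuous_iff_isClosed]
    intro C hC
    have himg : (⇑(MonoidHom.mk' Φ₀ hΦmul)) ⁻¹' C
        = Prod.fst '' ((G : Set (K₀ × K₁)) ∩ (Set.univ ×ˢ C)) := by
      ext k
      constructor
      · intro hk
        exact ⟨(k, Φ₀ k), ⟨hΦ₀ k, ⟨trivial, hk⟩⟩, rfl⟩
      · rintro ⟨⟨a, b⟩, ⟨hab, -, hb⟩, rfl⟩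
        have : b = Φ₀ a := huniq a b _ hab (hΦ₀ a)
        show Φ₀ a ∈ C
        rwa [← this]
    rw [himg]
    exact isClosedMap_fst_of_compactSpace _ (hGclosed.inter (isClosed_univ.prod hC))
  · intro γ
    exact huniq (γ : K₀) _ _ (hΦ₀ (γ : K₀)) (hmemG γ)
end
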